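/- arXiv:1708.00732 — 7 statements merged into one kernel-verified Lean document; each statement's English description precedes it below -/
import Mathlib

section
/- Let x: [0,∞) → ℝ be càdlàg and let (x^ε)_{ε>0} be càdlàg paths of locally finite total variation with sup_{s≥0} |x_s − x^ε_s| ≤ ε for every ε > 0. If the limit ⟨x⟩_t := 2 lim_{ε→0+} ∫_{(0,t]} (x_s − x^ε_s) dx^ε_s exists uniformly on compact subsets of [0,∞), then the function t ↦ ⟨x⟩_t is continuous on [0,∞). -/
open MeasureTheory Filter Topology Set
open scoped Classical

noncomputable section

/-- The jump `Δf_s = f s - f (s-)` of a path at a point. -/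
def jmp (f : ℝ → ℝ) (s : ℝ) : ℝ := f s - Function.leftLim f s

/-- A path `f : ℝ → ℝ` (thought of as a path on `[0,∞)`) is càdlàg: right-continuous at
every `t ≥ 0` and with finite left limits at every `t > 0`. -/
def Cadlag (f : ℝ → ℝ) : Prop :=
  (∀ t : ℝ, 0 ≤ t → ContinuousWithinAt f (Ici t) t) ∧
    ∀ t : ℝ, 0 < t → Tendsto f (𝓝[<] t) (𝓝 (Function.leftLim f t))

/-- `p = (u, v)` is a decomposition of `y` on `[0,∞)` as a difference of two nondecreasing
right-continuous functions. -/
def IsBVDecompOn (y : ℝ → ℝ) (p : StieltjesFunction ℝ × StieltjesFunction ℝ) : Prop :=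
  ∀ s : ℝ, 0 ≤ s → y s = p.1 s - p.2 s

/-- `y` has locally finite total variation on `[0,∞)`: for right-continuous `y` with left
limits this is equivalent to admitting a Jordan decomposition `y = u - v` with `u, v`
nondecreasing and right-continuous. -/
def LocBV (y : ℝ → ℝ) : Prop := ∃ p, IsBVDecompOn y p

/-- The Lebesgue–Stieltjes integral `∫_{(0,t]} g dy` of `g` with respect to the signed
Lebesgue–Stieltjes measure `μ_u - μ_v`, where `y = u - v` with `u, v` nondecreasing and
right-continuous.  (For integrable `g` its value does not depend on the choice of the
decomposition.) -/
def lsInt (y g : ℝ → ℝ) (t : ℝ) : ℝ :=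
  if h : ∃ p, IsBVDecompOn y p then
    (∫ s in Ioc (0:ℝ) t, g s ∂(h.choose.1.measure)) -
      ∫ s in Ioc (0:ℝ) t, g s ∂(h.choose.2.measure)
  else 0

/-- The integral `∫_{(0,t]} |g| |dy|` of `|g|` with respect to the total variation measure of
the signed Lebesgue–Stieltjes measure of `y`; it is computed from a minimal (mutually
singular on `(0,∞)`) decomposition of `y`, for which the total variation measure is
`μ_u + μ_v`. -/
def lsAbs (y g : ℝ → ℝ) (t : ℝ) : ℝ :=
  if h : ∃ p, IsBVDecompOn y p ∧
      (p.1.measure.restrict (Ioi 0)).MutuallySingular (p.2.measure.restrict (Ioi 0)) then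
    ∫ s in Ioc (0:ℝ) t, |g s| ∂(h.choose.1.measure + h.choose.2.measure)
  else 0

/-- The truncated variation of `x` on `[a,b]` with truncation parameter `ε`. -/
def TTV (x : ℝ → ℝ) (a b ε : ℝ) : ℝ :=
  sSup {v : ℝ | ∃ (n : ℕ) (t : ℕ → ℝ), a ≤ t 0 ∧ t n ≤ b ∧ (∀ i, i < n → t i < t (i + 1)) ∧
    v = ∑ i ∈ Finset.range n, max (|x (t (i + 1)) - x (t i)| - ε) 0}

/-- The upward truncated variation of `x` on `[a,b]` with truncation parameter `ε`. -/
def UTV (x : ℝ → ℝ) (a b ε : ℝ) : ℝ :=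
  sSup {v : ℝ | ∃ (n : ℕ) (t : ℕ → ℝ), a ≤ t 0 ∧ t n ≤ b ∧ (∀ i, i < n → t i < t (i + 1)) ∧
    v = ∑ i ∈ Finset.range n, max (x (t (i + 1)) - x (t i) - ε) 0}

/-- The downward truncated variation of `x` on `[a,b]` with truncation parameter `ε`. -/
def DTV (x : ℝ → ℝ) (a b ε : ℝ) : ℝ :=
  sSup {v : ℝ | ∃ (n : ℕ) (t : ℕ → ℝ), a ≤ t 0 ∧ t n ≤ b ∧ (∀ i, i < n → t i < t (i + 1)) ∧
    v = ∑ i ∈ Finset.range n, max (x (t i) - x (t (i + 1)) - ε) 0}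

/-- The standing assumptions: `x` is càdlàg with `Σ_{0<s≤t} (Δx_s)² < ∞` for all `t > 0`;
`𝒳 = (xe ε)_{ε>0}` is a family of càdlàg paths of locally finite total variation with
`sup_{s ≥ 0} |x s - xe ε s| ≤ ε`; `q = ⟨x⟩` is the uniform-on-compacts limit of
`2 ∫_{(0,·]} (x - xe ε) d(xe ε)` as `ε → 0+`;
`sup_{ε>0} ∫_{(0,t]} |x - xe ε| |d(xe ε)| < ∞` for every `t > 0`; and there is a constant
`K` with `|Δ(xe ε)_s| ≤ K |Δx_s|` for all `s > 0` and `ε > 0`. -/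
structure StandingAssumptions (x : ℝ → ℝ) (xe : ℝ → ℝ → ℝ) (q : ℝ → ℝ) : Prop where
  cadlag_x : Cadlag x
  jumps_sq_summable : ∀ t : ℝ, 0 < t → Summable fun s : Ioc (0:ℝ) t => jmp x (s : ℝ) ^ 2
  cadlag_xe : ∀ ε : ℝ, 0 < ε → Cadlag (xe ε)
  bv_xe : ∀ ε : ℝ, 0 < ε → LocBV (xe ε)
  approx : ∀ ε : ℝ, 0 < ε → ∀ s : ℝ, 0 ≤ s → |x s - xe ε s| ≤ ε
  qv_unif : ∀ T : ℝ, 0 ≤ T →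
    TendstoUniformlyOn (fun ε s => 2 * lsInt (xe ε) (fun r => x r - xe ε r) s) q
      (𝓝[>] 0) (Icc 0 T)
  bdd : ∀ t : ℝ, 0 < t → ∃ C : ℝ, ∀ ε : ℝ, 0 < ε →
    lsAbs (xe ε) (fun r => x r - xe ε r) t ≤ C
  jump_bdd : ∃ K : ℝ, ∀ ε : ℝ, 0 < ε → ∀ s : ℝ, 0 < s → |jmp (xe ε) s| ≤ K * |jmp x s|

/-- A function which is right-continuous at every positive point, cut off to vanish on
`(-∞, 0]`, is measurable. -/
lemma measurable_cutoff_of_rightCont (f : ℝ → ℝ)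
    (hf : ∀ s : ℝ, 0 < s → ContinuousWithinAt f (Ici s) s) :
    Measurable (fun s : ℝ => if 0 < s then f s else 0) := by
  have hmeas : ∀ n : ℕ,
      Measurable (fun s : ℝ => if 0 < s then f ((⌈s * 2 ^ n⌉ : ℝ) / 2 ^ n) else 0) := by
    intro n
    have h1 : Measurable fun s : ℝ => (⌈s * 2 ^ n⌉ : ℤ) :=
      Int.measurable_ceil.comp (measurable_id.mul_const _)
    have h2 : Measurable fun s : ℝ => f ((⌈s * 2 ^ n⌉ : ℝ) / 2 ^ n) :=
      (measurable_from_top (f := fun k : ℤ => f ((k : ℝ) / 2 ^ n))).comp h1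
    exact Measurable.ite measurableSet_Ioi h2 measurable_const
  apply measurable_of_tendsto_metrizable hmeas
  rw [tendsto_pi_nhds]
  intro s
  by_cases hs : 0 < s
  · simp only [if_pos hs]
    have hge : ∀ n : ℕ, s ≤ (⌈s * 2 ^ n⌉ : ℝ) / 2 ^ n := by
      intro n
      rw [le_div_iff₀ (by positivity)]
      exact Int.le_ceil _
    have hle : ∀ n : ℕ, (⌈s * 2 ^ n⌉ : ℝ) / 2 ^ n ≤ s + (1 / 2) ^ n := by
      intro n
      rw [div_le_iff₀ (by positivity : (0:ℝ) < 2 ^ n)]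
      have h1 : ((⌈s * 2 ^ n⌉ : ℤ) : ℝ) ≤ s * 2 ^ n + 1 := (Int.ceil_lt_add_one _).le
      have h2 : ((1:ℝ) / 2) ^ n * 2 ^ n = 1 := by
        rw [← mul_pow]; norm_num
      nlinarith [h2]
    have hlim : Tendsto (fun n : ℕ => (⌈s * 2 ^ n⌉ : ℝ) / 2 ^ n) atTop (𝓝 s) := by
      have h0 : Tendsto (fun n : ℕ => s + (1 / 2 : ℝ) ^ n) atTop (𝓝 (s + 0)) :=
        tendsto_const_nhds.add
          (tendsto_pow_atTop_nhds_zero_of_lt_one (by norm_num) (by norm_num))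
      rw [add_zero] at h0
      exact tendsto_of_tendsto_of_tendsto_of_le_of_le tendsto_const_nhds h0 hge hle
    have hkey : Tendsto (fun n : ℕ => (⌈s * 2 ^ n⌉ : ℝ) / 2 ^ n) atTop (𝓝[Ici s] s) :=
      tendsto_nhdsWithin_of_tendsto_nhds_of_eventually_within _ hlim
        (Eventually.of_forall hge)
    exact (hf s hs).tendsto.comp hkey
  · simp only [if_neg hs]
    exact tendsto_const_nhds

/-- the limit `⟨x⟩` (uniform on compacts) of `2∫_{(0,·]} (x - xᵉ) dxᵉ`
is continuous on `[0,∞)`. -/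
theorem statement4 (x : ℝ → ℝ) (xe : ℝ → ℝ → ℝ) (q : ℝ → ℝ)
    (hx : Cadlag x)
    (hcad : ∀ ε : ℝ, 0 < ε → Cadlag (xe ε))
    (hbv : ∀ ε : ℝ, 0 < ε → LocBV (xe ε))
    (happ : ∀ ε : ℝ, 0 < ε → ∀ s : ℝ, 0 ≤ s → |x s - xe ε s| ≤ ε)
    (hq : ∀ T : ℝ, 0 ≤ T →
      TendstoUniformlyOn (fun ε s => 2 * lsInt (xe ε) (fun r => x r - xe ε r) s) q
        (𝓝[>] 0) (Icc 0 T)) :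
    ContinuousOn q (Ici 0) := by
  intro t ht'
  have ht : (0:ℝ) ≤ t := ht'
  have hT0 : (0:ℝ) ≤ t + 1 := by linarith
  rw [ContinuousWithinAt, Metric.tendsto_nhds]
  intro δ hδ
  set T : ℝ := t + 1 with hTdef
  -- choose a good ε
  have huc := hq T hT0
  rw [Metric.tendstoUniformlyOn_iff] at huc
  have h1 := huc (δ / 4) (by linarith)
  have h2 : ∀ᶠ ε in 𝓝[>] (0:ℝ), 2 * ε * (|jmp x t| + 2 * ε) < δ / 8 := by
    have hcont : Continuous fun ε : ℝ => 2 * ε * (|jmp x t| + 2 * ε) := by continuity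
    have hc : Tendsto (fun ε : ℝ => 2 * ε * (|jmp x t| + 2 * ε)) (𝓝[>] 0) (𝓝 0) := by
      have := (hcont.tendsto 0).mono_left (nhdsWithin_le_nhds (s := Ioi (0:ℝ)))
      simpa using this
    exact hc.eventually_lt_const (by linarith)
  have h3 : ∀ᶠ ε in 𝓝[>] (0:ℝ), (0:ℝ) < ε := eventually_mem_nhdsWithin
  obtain ⟨ε, ⟨hunif0, hjmpε⟩, hε0⟩ := ((h1.and h2).and h3).exists
  -- set up the decomposition and basic notation
  set g : ℝ → ℝ := fun r => x r - xe ε r with hgdef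
  have hb : ∃ p, IsBVDecompOn (xe ε) p := hbv ε hε0
  set p1 : StieltjesFunction ℝ := hb.choose.1 with hp1def
  set p2 : StieltjesFunction ℝ := hb.choose.2 with hp2def
  have hdec : ∀ s : ℝ, 0 ≤ s → xe ε s = p1 s - p2 s := hb.choose_spec
  set F : ℝ → ℝ := fun s =>
    2 * ((∫ r in Ioc (0:ℝ) s, g r ∂p1.measure) - ∫ r in Ioc (0:ℝ) s, g r ∂p2.measure)
    with hFdef
  have hFeq : ∀ s : ℝ, 2 * lsInt (xe ε) (fun r => x r - xe ε r) s = F s := by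
    intro s
    rw [hFdef, lsInt, dif_pos hb]
  have hunif : ∀ s ∈ Icc (0:ℝ) T, dist (q s) (F s) < δ / 4 := by
    intro s hs
    have := hunif0 s hs
    rwa [hFeq s] at this
  -- measurability and integrability of g
  have hgrc : ∀ s : ℝ, 0 < s → ContinuousWithinAt g (Ici s) s := fun s hs =>
    (hx.1 s hs.le).sub ((hcad ε hε0).1 s hs.le)
  have hgm : Measurable (fun s : ℝ => if 0 < s then g s else 0) :=
    measurable_cutoff_of_rightCont g hgrc
  have hgb : ∀ s : ℝ, 0 ≤ s → |g s| ≤ ε := fun s hs => happ ε hε0 s hs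
  have haem : ∀ (p : StieltjesFunction ℝ) (s : Set ℝ), MeasurableSet s → s ⊆ Ioi 0 →
      AEStronglyMeasurable g (p.measure.restrict s) := by
    intro p s hs hsub
    refine ⟨fun r => if 0 < r then g r else 0, hgm.stronglyMeasurable, ?_⟩
    filter_upwards [ae_restrict_mem hs] with r hr
    exact (if_pos (hsub hr)).symm
  have hint : ∀ (p : StieltjesFunction ℝ) (a b : ℝ), 0 ≤ a →
      IntegrableOn g (Ioc a b) p.measure := by
    intro p a b ha
    have hfin : p.measure (Ioc a b) < ⊤ := by
      rw [p.measure_Ioc]; exact ENNReal.ofReal_lt_top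
    have hsub : Ioc a b ⊆ Ioi (0:ℝ) := fun r hr => lt_of_le_of_lt ha hr.1
    haveI : IsFiniteMeasure (p.measure.restrict (Ioc a b)) := by
      constructor
      rwa [Measure.restrict_apply_univ]
    refine Integrable.mono' (integrable_const ε) (haem p _ measurableSet_Ioc hsub) ?_
    filter_upwards [ae_restrict_mem measurableSet_Ioc] with r hr
    rw [Real.norm_eq_abs]
    exact hgb r (le_of_lt (hsub hr))
  have hIb : ∀ (p : StieltjesFunction ℝ) (s : Set ℝ), MeasurableSet s → s ⊆ Ioi 0 →
      p.measure s < ⊤ → |∫ r in s, g r ∂p.measure| ≤ ε * (p.measure s).toReal := by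
    intro p s hs hsub hfin
    have := norm_setIntegral_le_of_norm_le_const (μ := p.measure) (f := g) hfin
      (fun r hr => by rw [Real.norm_eq_abs]; exact hgb r (le_of_lt (hsub hr)))
    simpa [Real.norm_eq_abs, measureReal_def] using this
  have hIocToReal : ∀ (p : StieltjesFunction ℝ) (a b : ℝ), a ≤ b →
      (p.measure (Ioc a b)).toReal = p b - p a := by
    intro p a b hab
    rw [p.measure_Ioc, ENNReal.toReal_ofReal (sub_nonneg.2 (p.mono hab))]
  have hIooToReal : ∀ (p : StieltjesFunction ℝ) (a b : ℝ), a < b →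
      (p.measure (Ioo a b)).toReal = Function.leftLim p b - p a := by
    intro p a b hab
    rw [p.measure_Ioo, ENNReal.toReal_ofReal (sub_nonneg.2 (p.mono.le_leftLim hab))]
  -- additivity of the integrals
  have hadd : ∀ (p : StieltjesFunction ℝ) (u v : ℝ), 0 ≤ u → u ≤ v →
      (∫ r in Ioc (0:ℝ) v, g r ∂p.measure) =
        (∫ r in Ioc (0:ℝ) u, g r ∂p.measure) + ∫ r in Ioc u v, g r ∂p.measure := by
    intro p u v hu huv
    rw [← setIntegral_union (Ioc_disjoint_Ioc_of_le le_rfl) measurableSet_Ioc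
      (hint p 0 u le_rfl) (hint p u v hu), Ioc_union_Ioc_eq_Ioc hu huv]
  have hFsub : ∀ u v : ℝ, 0 ≤ u → u ≤ v →
      F v - F u = 2 * ((∫ r in Ioc u v, g r ∂p1.measure) -
        ∫ r in Ioc u v, g r ∂p2.measure) := by
    intro u v hu huv
    rw [hFdef]
    simp only
    rw [hadd p1 u v hu huv, hadd p2 u v hu huv]
    ring
  -- the right-hand estimate
  have hrightF : ∀ᶠ u in 𝓝[Ici t] t, |F u - F t| < δ / 4 := by
    have hbnd : Tendsto (fun u => 2 * (ε * (p1 u - p1 t) + ε * (p2 u - p2 t)))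
        (𝓝[Ici t] t) (𝓝 0) := by
      have h1 : Tendsto p1 (𝓝[Ici t] t) (𝓝 (p1 t)) := p1.right_continuous t
      have h2 : Tendsto p2 (𝓝[Ici t] t) (𝓝 (p2 t)) := p2.right_continuous t
      have := ((h1.sub_const (p1 t)).const_mul ε).add ((h2.sub_const (p2 t)).const_mul ε)
      have := this.const_mul 2
      simpa using this
    filter_upwards [hbnd.eventually_lt_const (by linarith : (0:ℝ) < δ / 4),
      eventually_mem_nhdsWithin] with u hu hut
    have hut' : t ≤ u := hut
    have hE : F u - F t = 2 * ((∫ r in Ioc t u, g r ∂p1.measure) -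
        ∫ r in Ioc t u, g r ∂p2.measure) := hFsub t u ht hut'
    have hsub : Ioc t u ⊆ Ioi (0:ℝ) := fun r hr => lt_of_le_of_lt ht hr.1
    have hfin1 : p1.measure (Ioc t u) < ⊤ := by rw [p1.measure_Ioc]; exact ENNReal.ofReal_lt_top
    have hfin2 : p2.measure (Ioc t u) < ⊤ := by rw [p2.measure_Ioc]; exact ENNReal.ofReal_lt_top
    have hb1 := hIb p1 (Ioc t u) measurableSet_Ioc hsub hfin1
    have hb2 := hIb p2 (Ioc t u) measurableSet_Ioc hsub hfin2
    rw [hIocToReal p1 t u hut'] at hb1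
    rw [hIocToReal p2 t u hut'] at hb2
    have hstep : |(∫ r in Ioc t u, g r ∂p1.measure) - ∫ r in Ioc t u, g r ∂p2.measure|
        ≤ ε * (p1 u - p1 t) + ε * (p2 u - p2 t) :=
      (abs_sub _ _).trans (add_le_add hb1 hb2)
    calc |F u - F t| ≤ 2 * (ε * (p1 u - p1 t) + ε * (p2 u - p2 t)) := by
          rw [hE, abs_mul, abs_two]
          linarith
      _ < δ / 4 := hu
  -- the left-hand estimate (only needed when 0 < t)
  have hleftF : ∀ᶠ u in 𝓝[Ico 0 t] t, |F u - F t| < δ / 4 := by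
    rcases eq_or_lt_of_le ht with htz | htpos
    · rw [← htz, Ico_self, nhdsWithin_empty]
      exact Filter.eventually_bot
    · -- jump of xe ε at t
      set L1 : ℝ := Function.leftLim p1 t with hL1
      set L2 : ℝ := Function.leftLim p2 t with hL2
      have hIoo : Ioo (0:ℝ) t ∈ 𝓝[<] t := Ioo_mem_nhdsLT_of_mem ⟨htpos, le_rfl⟩
      have hLxe : Tendsto (xe ε) (𝓝[<] t) (𝓝 (L1 - L2)) := by
        have h12 := (p1.mono.tendsto_leftLim t).sub (p2.mono.tendsto_leftLim t)
        apply h12.congr'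
        filter_upwards [hIoo] with u hu
        exact (hdec u hu.1.le).symm
      have hLg : Tendsto g (𝓝[<] t) (𝓝 (Function.leftLim x t - (L1 - L2))) :=
        (hx.2 t htpos).sub hLxe
      have hMle : |Function.leftLim x t - (L1 - L2)| ≤ ε := by
        have habs : Tendsto (fun u => |g u|) (𝓝[<] t)
            (𝓝 |Function.leftLim x t - (L1 - L2)|) := hLg.abs
        apply le_of_tendsto habs
        filter_upwards [hIoo] with u hu
        exact hgb u hu.1.le
      have hDxe : |(p1 t - L1) - (p2 t - L2)| ≤ |jmp x t| + 2 * ε := by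
        have hxet : xe ε t = p1 t - p2 t := hdec t ht
        have hgt : |g t| ≤ ε := hgb t ht
        have hkey : (p1 t - L1) - (p2 t - L2)
            = jmp x t - g t + (Function.leftLim x t - (L1 - L2)) := by
          have : xe ε t = x t - g t := by simp [hgdef]
          rw [jmp]
          nlinarith [hxet, this]
        rw [hkey]
        calc |jmp x t - g t + (Function.leftLim x t - (L1 - L2))|
            ≤ |jmp x t| + |g t| + |Function.leftLim x t - (L1 - L2)| := by
              have := abs_add_le (jmp x t - g t) (Function.leftLim x t - (L1 - L2))
              have := abs_sub (jmp x t) (g t)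
              nlinarith [abs_nonneg (jmp x t - g t)]
          _ ≤ |jmp x t| + 2 * ε := by linarith
      -- the bound function tends to something < δ/4
      have hbndlim : Tendsto
          (fun u => 2 * (ε * (L1 - p1 u) + ε * (L2 - p2 u)) + 2 * ε * (|jmp x t| + 2 * ε))
          (𝓝[<] t) (𝓝 (2 * ε * (|jmp x t| + 2 * ε))) := by
        have h1 := p1.mono.tendsto_leftLim t
        have h2 := p2.mono.tendsto_leftLim t
        have := ((((tendsto_const_nhds (x := L1) (f := 𝓝[<] t)).sub h1).const_mul ε).add
          (((tendsto_const_nhds (x := L2) (f := 𝓝[<] t)).sub h2).const_mul ε)).const_mul 2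
        have h3 := this.add_const (2 * ε * (|jmp x t| + 2 * ε))
        simpa [hL1, hL2] using h3
      have hbndev : ∀ᶠ u in 𝓝[<] t,
          2 * (ε * (L1 - p1 u) + ε * (L2 - p2 u)) + 2 * ε * (|jmp x t| + 2 * ε) < δ / 4 :=
        hbndlim.eventually_lt_const (by linarith)
      have hmono : 𝓝[Ico 0 t] t ≤ 𝓝[<] t := nhdsWithin_mono t Ico_subset_Iio_self
      filter_upwards [hmono hbndev, eventually_mem_nhdsWithin] with u hu hum
      obtain ⟨hu0, hut⟩ := hum
      -- split the increment
      have hE : F t - F u = 2 * ((∫ r in Ioc u t, g r ∂p1.measure) -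
          ∫ r in Ioc u t, g r ∂p2.measure) := hFsub u t hu0 hut.le
      have hsplitI : ∀ p : StieltjesFunction ℝ,
          (∫ r in Ioc u t, g r ∂p.measure) =
            (∫ r in Ioo u t, g r ∂p.measure) + (p.measure {t}).toReal * g t := by
        intro p
        have hdisj : Disjoint (Ioo u t) ({t} : Set ℝ) := by
          simp [Set.disjoint_singleton_right]
        have hi1 : IntegrableOn g (Ioo u t) p.measure :=
          (hint p u t hu0).mono_set Ioo_subset_Ioc_self
        have hi2 : IntegrableOn g ({t} : Set ℝ) p.measure :=
          (hint p u t hu0).mono_set (by simp [Set.singleton_subset_iff, hut, le_refl])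
        rw [← Ioo_union_right hut, setIntegral_union hdisj (measurableSet_singleton t) hi1 hi2,
          integral_singleton]
        simp [mul_comm, measureReal_def]
      have hsing : ∀ p : StieltjesFunction ℝ,
          (p.measure {t}).toReal = p t - Function.leftLim p t := by
        intro p
        rw [p.measure_singleton, ENNReal.toReal_ofReal (sub_nonneg.2 (p.mono.leftLim_le le_rfl))]
      have hE2 : F t - F u = 2 * ((∫ r in Ioo u t, g r ∂p1.measure) -
          (∫ r in Ioo u t, g r ∂p2.measure) + g t * ((p1 t - L1) - (p2 t - L2))) := by
        rw [hE, hsplitI p1, hsplitI p2, hsing p1, hsing p2]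
        ring
      -- bounds
      have hsubO : Ioo u t ⊆ Ioi (0:ℝ) := fun r hr => lt_of_le_of_lt hu0 hr.1
      have hfin1 : p1.measure (Ioo u t) < ⊤ := by rw [p1.measure_Ioo]; exact ENNReal.ofReal_lt_top
      have hfin2 : p2.measure (Ioo u t) < ⊤ := by rw [p2.measure_Ioo]; exact ENNReal.ofReal_lt_top
      have hb1 := hIb p1 (Ioo u t) measurableSet_Ioo hsubO hfin1
      have hb2 := hIb p2 (Ioo u t) measurableSet_Ioo hsubO hfin2
      rw [hIooToReal p1 u t hut] at hb1
      rw [hIooToReal p2 u t hut] at hb2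
      have hgt : |g t| ≤ ε := hgb t ht
      have hjterm : |g t * ((p1 t - L1) - (p2 t - L2))| ≤ ε * (|jmp x t| + 2 * ε) := by
        rw [abs_mul]
        have h1 : (0:ℝ) ≤ |jmp x t| + 2 * ε := by positivity
        exact mul_le_mul hgt hDxe (abs_nonneg _) (by linarith)
      have ha2 : |(∫ r in Ioo u t, g r ∂p1.measure) - ∫ r in Ioo u t, g r ∂p2.measure|
          ≤ ε * (L1 - p1 u) + ε * (L2 - p2 u) :=
        (abs_sub _ _).trans (add_le_add hb1 hb2)
      have ha1 := abs_add_le ((∫ r in Ioo u t, g r ∂p1.measure) -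
        (∫ r in Ioo u t, g r ∂p2.measure)) (g t * ((p1 t - L1) - (p2 t - L2)))
      have habs : |F t - F u| ≤
          2 * (ε * (L1 - p1 u) + ε * (L2 - p2 u)) + 2 * ε * (|jmp x t| + 2 * ε) := by
        rw [hE2, abs_mul, abs_two]
        linarith
      rw [abs_sub_comm]
      exact lt_of_le_of_lt habs hu
  -- assemble
  have hsplit : 𝓝[Ici 0] t ≤ 𝓝[Ico 0 t] t ⊔ 𝓝[Ici t] t := by
    rw [← nhdsWithin_union]
    apply nhdsWithin_mono
    intro u hu
    rcases lt_or_ge u t with h | h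
    · exact Or.inl ⟨hu, h⟩
    · exact Or.inr h
  apply Filter.Eventually.filter_mono hsplit
  rw [Filter.eventually_sup]
  have htmem : t ∈ Icc (0:ℝ) T := ⟨ht, by rw [hTdef]; linarith⟩
  have hqt := hunif t htmem
  constructor
  · filter_upwards [hleftF, eventually_mem_nhdsWithin] with u hFu hu
    have humem : u ∈ Icc (0:ℝ) T := ⟨hu.1, by rw [hTdef]; linarith [hu.2]⟩
    have hqu := hunif u humem
    calc dist (q u) (q t) ≤ dist (q u) (F u) + dist (F u) (F t) + dist (F t) (q t) :=
          dist_triangle4 _ _ _ _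
      _ < δ / 4 + δ / 4 + δ / 4 := by
          apply add_lt_add (add_lt_add hqu _) _
          · rw [Real.dist_eq]; exact hFu
          · rw [dist_comm]; exact hqt
      _ < δ := by linarith
  · have hltT : ∀ᶠ u in 𝓝[Ici t] t, u < T := by
      apply mem_nhdsWithin_of_mem_nhds
      exact Iio_mem_nhds (by rw [hTdef]; linarith)
    filter_upwards [hrightF, eventually_mem_nhdsWithin, hltT] with u hFu hu huT
    have humem : u ∈ Icc (0:ℝ) T := ⟨le_trans ht hu, huT.le⟩
    have hqu := hunif u humem
    calc dist (q u) (q t) ≤ dist (q u) (F u) + dist (F u) (F t) + dist (F t) (q t) :=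
          dist_triangle4 _ _ _ _
      _ < δ / 4 + δ / 4 + δ / 4 := by
          apply add_lt_add (add_lt_add hqu _) _
          · rw [Real.dist_eq]; exact hFu
          · rw [dist_comm]; exact hqt
      _ < δ := by linarith
end
end

section
/- Let x: [0,∞) → ℝ be càdlàg and let x^ε be a càdlàg path of locally finite total variation with sup_{s≥0} |x_s − x^ε_s| ≤ ε. Fix t > 0 and define ⟨x⟩^ε_s := 2 ∫_{(0,s]} (x_u − x^ε_u) dx^ε_u for s ∈ [0,t]. Then every jump of the càdlàg function s ↦ ⟨x⟩^ε_s on (0,t] satisfies |Δ⟨x⟩^ε_s| ≤ 2ε · ( sup_{0<u≤t} |Δx_u| + 2ε ). -/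
open MeasureTheory Filter Topology Set
open scoped Classical

noncomputable section

/-- A function right-continuous at every point is measurable. -/
lemma measurable_of_rightCont (f : ℝ → ℝ)
    (hf : ∀ u : ℝ, ContinuousWithinAt f (Ici u) u) : Measurable f := by
  have key : ∀ u : ℝ, Tendsto (fun n : ℕ => f ((⌈u * 2 ^ n⌉ : ℝ) / 2 ^ n)) atTop (𝓝 (f u)) := by
    intro u
    have hpos : ∀ n : ℕ, (0:ℝ) < 2 ^ n := fun n => by positivity
    have hge : ∀ n : ℕ, u ≤ (⌈u * 2 ^ n⌉ : ℝ) / 2 ^ n := by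
      intro n
      rw [le_div_iff₀ (hpos n)]
      exact Int.le_ceil _
    have hlt : ∀ n : ℕ, (⌈u * 2 ^ n⌉ : ℝ) / 2 ^ n ≤ u + 1 / 2 ^ n := by
      intro n
      rw [div_le_iff₀ (hpos n), add_mul, one_div, inv_mul_cancel₀ (hpos n).ne']
      exact (Int.ceil_lt_add_one _).le
    have htends : Tendsto (fun n : ℕ => (⌈u * 2 ^ n⌉ : ℝ) / 2 ^ n) atTop (𝓝 u) := by
      have h1 : Tendsto (fun n : ℕ => (1:ℝ) / 2 ^ n) atTop (𝓝 0) := by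
        simpa [one_div, inv_pow] using
          tendsto_pow_atTop_nhds_zero_of_lt_one (by norm_num : (0:ℝ) ≤ 2⁻¹)
            (by norm_num : (2:ℝ)⁻¹ < 1)
      have h0 : Tendsto (fun n : ℕ => u + 1 / 2 ^ n) atTop (𝓝 (u + 0)) :=
        tendsto_const_nhds.add h1
      rw [add_zero] at h0
      exact tendsto_of_tendsto_of_tendsto_of_le_of_le tendsto_const_nhds h0 hge hlt
    exact (hf u).tendsto.comp
      (tendsto_nhdsWithin_of_tendsto_nhds_of_eventually_within _ htends
        (Eventually.of_forall fun n => hge n))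
  refine measurable_of_tendsto_metrizable (fun n => ?_) (tendsto_pi_nhds.2 key)
  exact (measurable_of_countable (fun k : ℤ => f ((k : ℝ) / 2 ^ n))).comp
    (Int.measurable_ceil.comp (measurable_id.mul_const _))


/-- A càdlàg function is bounded on `[0, t]`. -/
lemma cadlag_bounded (x : ℝ → ℝ) (hx : Cadlag x) (t : ℝ) :
    ∃ M : ℝ, ∀ u ∈ Icc (0:ℝ) t, |x u| ≤ M := by
  have := (isCompact_Icc (a := (0:ℝ)) (b := t)).induction_on
    (p := fun S => ∃ M : ℝ, ∀ u ∈ S, |x u| ≤ M)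
    ⟨0, fun u hu => hu.elim⟩
    (fun S T hST ⟨M, hM⟩ => ⟨M, fun u hu => hM u (hST hu)⟩)
    (fun S T ⟨M, hM⟩ ⟨N, hN⟩ => ⟨max M N, fun u hu => hu.elim
      (fun h => (hM u h).trans (le_max_left _ _))
      (fun h => (hN u h).trans (le_max_right _ _))⟩)
    ?_
  · exact this
  intro u hu
  have h1 : ∀ᶠ v in 𝓝[Icc 0 t ∩ Ici u] u, |x v| ≤ |x u| + 1 := by
    have : Tendsto x (𝓝[Icc 0 t ∩ Ici u] u) (𝓝 (x u)) :=
      (hx.1 u hu.1).tendsto.mono_left (nhdsWithin_mono u inter_subset_right)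
    filter_upwards [this.eventually (eventually_abs_sub_lt (x u) one_pos)] with v hv
    calc |x v| ≤ |x u| + |x v - x u| := by
          have := abs_sub_abs_le_abs_sub (x v) (x u); linarith [abs_nonneg (x v - x u)]
      _ ≤ |x u| + 1 := by linarith [le_of_lt hv]
  have h2 : ∀ᶠ v in 𝓝[Icc 0 t ∩ Iio u] u, |x v| ≤ |Function.leftLim x u| + 1 := by
    rcases eq_or_lt_of_le hu.1 with h0 | h0
    · have : Icc (0:ℝ) t ∩ Iio u = ∅ := by
        ext v; simp only [mem_inter_iff, mem_Icc, mem_Iio, mem_empty_iff_false, iff_false]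
        rintro ⟨⟨h1', _⟩, h2'⟩; rw [← h0] at h2'; linarith
      rw [this, nhdsWithin_empty]; exact eventually_bot
    · have : Tendsto x (𝓝[Icc 0 t ∩ Iio u] u) (𝓝 (Function.leftLim x u)) :=
        (hx.2 u h0).mono_left (nhdsWithin_mono u inter_subset_right)
      filter_upwards [this.eventually (eventually_abs_sub_lt _ one_pos)] with v hv
      calc |x v| ≤ |Function.leftLim x u| + |x v - Function.leftLim x u| := by
            have := abs_sub_abs_le_abs_sub (x v) (Function.leftLim x u)
            linarith [abs_nonneg (x v - Function.leftLim x u)]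
        _ ≤ _ := by linarith [le_of_lt hv]
  have hsplit : 𝓝[Icc (0:ℝ) t] u ≤ 𝓝[Icc 0 t ∩ Ici u] u ⊔ 𝓝[Icc 0 t ∩ Iio u] u := by
    rw [← nhdsWithin_union, ← inter_union_distrib_left]
    refine nhdsWithin_mono u ?_
    intro v hv
    exact ⟨hv, le_or_gt u v |>.imp id id⟩
  have : ∀ᶠ v in 𝓝[Icc (0:ℝ) t] u, |x v| ≤ max (|x u| + 1) (|Function.leftLim x u| + 1) := by
    refine Eventually.filter_mono hsplit (Filter.eventually_sup.2 ⟨?_, ?_⟩)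
    · filter_upwards [h1] with v hv using hv.trans (le_max_left _ _)
    · filter_upwards [h2] with v hv using hv.trans (le_max_right _ _)
  exact ⟨_, this, max (|x u| + 1) (|Function.leftLim x u| + 1), fun v hv => hv⟩

/-- Left-continuity of the Stieltjes set integral. -/
lemma tendsto_setIntegral_Ioc (p : StieltjesFunction ℝ) (g : ℝ → ℝ) (hg : Measurable g)
    (C : ℝ) (hb : ∀ u, |g u| ≤ C) (s : ℝ) (hs : 0 < s) :
    Tendsto (fun r => ∫ u in Ioc (0:ℝ) r, g u ∂p.measure) (𝓝[<] s)
      (𝓝 (∫ u in Ioo (0:ℝ) s, g u ∂p.measure)) := by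
  have hfin : ∀ a b : ℝ, p.measure (Ioo a b) < ⊤ := fun a b => by
    rw [p.measure_Ioo]; exact ENNReal.ofReal_lt_top
  have hint : ∀ (S : Set ℝ), S ⊆ Ioo 0 s → MeasurableSet S → IntegrableOn g S p.measure := by
    intro S hS hSm
    refine Integrable.mono' ((integrableOn_const_iff (C := C) (by simp)).2 (Or.inr ?_)) (hg.aestronglyMeasurable)
      (Eventually.of_forall fun u => by simpa using hb u)
    exact lt_of_le_of_lt (measure_mono hS) (hfin 0 s)
  have key : ∀ᶠ r in 𝓝[<] s, ‖(∫ u in Ioc (0:ℝ) r, g u ∂p.measure) -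
      ∫ u in Ioo (0:ℝ) s, g u ∂p.measure‖ ≤ C * (Function.leftLim p s - p r) := by
    filter_upwards [Ioo_mem_nhdsLT_of_mem (by constructor <;> [exact hs; exact le_refl s] :
      s ∈ Ioc (0:ℝ) s)] with r hr
    have hr1 : 0 < r := hr.1
    have hr2 : r < s := hr.2
    have hsplit : (Ioc (0:ℝ) r) ∪ Ioo r s = Ioo 0 s := Ioc_union_Ioo_eq_Ioo hr1.le hr2
    have hdisj : Disjoint (Ioc (0:ℝ) r) (Ioo r s) := by
      apply Set.disjoint_left.2; rintro v ⟨_, h1⟩ ⟨h2, _⟩; linarith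
    have heq : ∫ u in Ioo (0:ℝ) s, g u ∂p.measure =
        (∫ u in Ioc (0:ℝ) r, g u ∂p.measure) + ∫ u in Ioo r s, g u ∂p.measure := by
      rw [← hsplit]
      exact setIntegral_union hdisj measurableSet_Ioo
        (hint _ (hsplit ▸ subset_union_left) measurableSet_Ioc)
        (hint _ (hsplit ▸ subset_union_right) measurableSet_Ioo)
    rw [heq]
    have hbound : ‖∫ u in Ioo r s, g u ∂p.measure‖ ≤ C * (p.measure (Ioo r s)).toReal :=
      norm_setIntegral_le_of_norm_le_const (hfin r s)
        (fun v _ => by rw [Real.norm_eq_abs]; exact hb v)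
    have hm : (p.measure (Ioo r s)).toReal = Function.leftLim p s - p r := by
      rw [p.measure_Ioo, ENNReal.toReal_ofReal (by linarith [p.mono.le_leftLim hr2])]
    rw [show (∫ u in Ioc (0:ℝ) r, g u ∂p.measure) - ((∫ u in Ioc (0:ℝ) r, g u ∂p.measure) +
      ∫ u in Ioo r s, g u ∂p.measure) = -(∫ u in Ioo r s, g u ∂p.measure) by ring,
      norm_neg]
    rw [hm] at hbound; exact hbound
  have hlim : Tendsto (fun r => C * (Function.leftLim p s - p r)) (𝓝[<] s) (𝓝 0) := by
    have := (p.mono.tendsto_leftLim s)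
    have h0 : Tendsto (fun r => Function.leftLim p s - p r) (𝓝[<] s)
        (𝓝 (Function.leftLim p s - Function.leftLim p s)) := tendsto_const_nhds.sub this
    rw [sub_self] at h0
    simpa using h0.const_mul C
  have := squeeze_zero_norm' key hlim
  have h2 := this.add (tendsto_const_nhds (x := ∫ u in Ioo (0:ℝ) s, g u ∂p.measure)
    (f := 𝓝[<] s))
  simpa using h2

section MainProof
variable {x xe : ℝ → ℝ}

lemma integrableOn_of_bounded' (p : StieltjesFunction ℝ) (g : ℝ → ℝ) (hg : Measurable g)
    (C : ℝ) (hb : ∀ u, |g u| ≤ C) {a b : ℝ} {S : Set ℝ} (hS : S ⊆ Ioc a b)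
    (hSm : MeasurableSet S) : IntegrableOn g S p.measure := by
  refine Integrable.mono' ((integrableOn_const_iff (C := C) (by simp)).2 (Or.inr ?_)) hg.aestronglyMeasurable
    (Eventually.of_forall fun u => by simpa using hb u)
  refine lt_of_le_of_lt (measure_mono hS) ?_
  rw [p.measure_Ioc]; exact ENNReal.ofReal_lt_top

/-- jumps of `s ↦ ⟨x⟩ᵉ_s = 2∫_{(0,s]} (x - xᵉ) dxᵉ` on `(0,t]` are bounded by
`2ε (sup_{0<u≤t} |Δx_u| + 2ε)`. -/
theorem statement5 (x xe : ℝ → ℝ) (ε : ℝ) (hε : 0 < ε)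
    (hx : Cadlag x) (hxe : Cadlag xe) (hbv : LocBV xe)
    (happ : ∀ s : ℝ, 0 ≤ s → |x s - xe s| ≤ ε)
    (t : ℝ) (ht : 0 < t) (s : ℝ) (hs : s ∈ Ioc (0:ℝ) t) :
    |jmp (fun r => 2 * lsInt xe (fun u => x u - xe u) r) s| ≤
      2 * ε * ((⨆ u : Ioc (0:ℝ) t, |jmp x (u : ℝ)|) + 2 * ε) := by
  obtain ⟨spos, slet⟩ := hs
  have hne : 𝓝[<] s ≠ ⊥ := (nhdsLT_neBot s).ne'
  -- the measurable bounded version of x - xe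
  set g1 : ℝ → ℝ := fun u => x (max u 0) - xe (max u 0) with hg1def
  have hrc : ∀ (f : ℝ → ℝ), Cadlag f → ∀ u : ℝ,
      ContinuousWithinAt (fun v => f (max v 0)) (Ici u) u := by
    intro f hf u
    have hc : ContinuousWithinAt (fun v : ℝ => max v 0) (Ici u) u :=
      (continuous_id.max continuous_const).continuousWithinAt
    have hmaps : MapsTo (fun v : ℝ => max v 0) (Ici u) (Ici (max u 0)) :=
      fun v (hv : u ≤ v) => show max u 0 ≤ max v 0 from max_le_max hv le_rfl
    show ContinuousWithinAt (f ∘ fun v : ℝ => max v 0) (Ici u) u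
    exact ContinuousWithinAt.comp (hf.1 (max u 0) (le_max_right _ _)) hc hmaps
  have hgm : Measurable g1 :=
    (measurable_of_rightCont _ (hrc x hx)).sub (measurable_of_rightCont _ (hrc xe hxe))
  have hgb : ∀ u, |g1 u| ≤ ε := fun u => happ _ (le_max_right _ _)
  -- decomposition
  have h : ∃ p, IsBVDecompOn xe p := hbv
  set p1 := h.choose.1 with hp1
  set p2 := h.choose.2 with hp2
  have hdec : ∀ u : ℝ, 0 ≤ u → xe u = p1 u - p2 u := h.choose_spec
  -- rewrite lsInt
  have hF : ∀ r : ℝ, lsInt xe (fun u => x u - xe u) r =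
      (∫ u in Ioc (0:ℝ) r, g1 u ∂p1.measure) - ∫ u in Ioc (0:ℝ) r, g1 u ∂p2.measure := by
    intro r
    have heq : ∀ (μ : Measure ℝ), (∫ u in Ioc (0:ℝ) r, (x u - xe u) ∂μ) =
        ∫ u in Ioc (0:ℝ) r, g1 u ∂μ := by
      intro μ
      refine setIntegral_congr_fun measurableSet_Ioc (fun u hu => ?_)
      simp [hg1def, max_eq_left hu.1.le]
    unfold lsInt
    rw [dif_pos h, heq, heq]
  -- the left limit of the integral
  set I1 := ∫ u in Ioo (0:ℝ) s, g1 u ∂p1.measure with hI1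
  set I2 := ∫ u in Ioo (0:ℝ) s, g1 u ∂p2.measure with hI2
  have htend : Tendsto (fun r => 2 * lsInt xe (fun u => x u - xe u) r) (𝓝[<] s)
      (𝓝 (2 * (I1 - I2))) := by
    have h0 := ((tendsto_setIntegral_Ioc p1 g1 hgm ε hgb s spos).sub
      (tendsto_setIntegral_Ioc p2 g1 hgm ε hgb s spos)).const_mul 2
    exact h0.congr (fun r => by rw [hF r])
  have hleft : Function.leftLim (fun r => 2 * lsInt xe (fun u => x u - xe u) r) s
      = 2 * (I1 - I2) := leftLim_eq_of_tendsto htend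
  -- singleton integral
  have hsing : ∀ p : StieltjesFunction ℝ,
      (∫ u in Ioc (0:ℝ) s, g1 u ∂p.measure) - (∫ u in Ioo (0:ℝ) s, g1 u ∂p.measure)
        = g1 s * (p s - Function.leftLim p s) := by
    intro p
    have hsplit : Ioo (0:ℝ) s ∪ {s} = Ioc (0:ℝ) s := Ioo_union_right spos
    have hdisj : Disjoint (Ioo (0:ℝ) s) ({s} : Set ℝ) := by
      simp only [disjoint_singleton_right, mem_Ioo]
      exact fun hc => lt_irrefl s hc.2
    have : (∫ u in Ioc (0:ℝ) s, g1 u ∂p.measure)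
        = (∫ u in Ioo (0:ℝ) s, g1 u ∂p.measure) + ∫ u in ({s} : Set ℝ), g1 u ∂p.measure := by
      rw [← hsplit]
      exact setIntegral_union hdisj (measurableSet_singleton s)
        (integrableOn_of_bounded' p g1 hgm ε hgb (fun u hu => ⟨hu.1, hu.2.le⟩) measurableSet_Ioo)
        (integrableOn_of_bounded' p g1 hgm ε hgb
          (singleton_subset_iff.2 (⟨spos, le_rfl⟩ : s ∈ Ioc (0:ℝ) s))
          (measurableSet_singleton s))
    rw [this, integral_singleton, measureReal_def, p.measure_singleton,
      ENNReal.toReal_ofReal (by linarith [p.mono.leftLim_le (le_refl s)])]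
    ring_nf
  -- left limit of xe and the jump of xe
  have hxelim : Tendsto xe (𝓝[<] s) (𝓝 (Function.leftLim p1 s - Function.leftLim p2 s)) := by
    refine Tendsto.congr' ?_ ((p1.mono.tendsto_leftLim s).sub (p2.mono.tendsto_leftLim s))
    filter_upwards [mem_nhdsWithin_of_mem_nhds (Ioi_mem_nhds spos)] with u hu
    exact (hdec u (le_of_lt hu)).symm
  have hxeleft : Function.leftLim xe s = Function.leftLim p1 s - Function.leftLim p2 s :=
    leftLim_eq_of_tendsto hxelim
  have hjxe : jmp xe s = (p1 s - Function.leftLim p1 s) - (p2 s - Function.leftLim p2 s) := by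
    rw [jmp, hxeleft, hdec s spos.le]; ring
  -- jump formula
  have hjump : jmp (fun r => 2 * lsInt xe (fun u => x u - xe u) r) s
      = 2 * ((x s - xe s) * jmp xe s) := by
    rw [jmp, hleft, hF s]
    have := hsing p1
    have := hsing p2
    have hg1s : g1 s = x s - xe s := by simp [hg1def, max_eq_left spos.le]
    rw [hjxe, ← hg1s]
    linarith [hsing p1, hsing p2]
  -- bound on |jmp xe s|
  have hjxe_bdd : |jmp xe s| ≤ |jmp x s| + 2 * ε := by
    have hxlim : Tendsto x (𝓝[<] s) (𝓝 (Function.leftLim x s)) := hx.2 s spos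
    have hglim : Tendsto (fun u => x u - xe u) (𝓝[<] s)
        (𝓝 (Function.leftLim x s - Function.leftLim xe s)) := by
      rw [hxeleft]; exact hxlim.sub hxelim
    have hgl : |Function.leftLim x s - Function.leftLim xe s| ≤ ε := by
      refine le_of_tendsto hglim.abs ?_
      filter_upwards [mem_nhdsWithin_of_mem_nhds (Ioi_mem_nhds spos)] with u hu
      exact happ u (le_of_lt hu)
    have hgs : |x s - xe s| ≤ ε := happ s spos.le
    have hkey : jmp xe s = jmp x s - ((x s - xe s) - (Function.leftLim x s - Function.leftLim xe s)) := by
      simp only [jmp]; ring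
    rw [hkey]
    calc |jmp x s - ((x s - xe s) - (Function.leftLim x s - Function.leftLim xe s))|
        ≤ |jmp x s| + |(x s - xe s) - (Function.leftLim x s - Function.leftLim xe s)| :=
          abs_sub _ _
      _ ≤ |jmp x s| + (|x s - xe s| + |Function.leftLim x s - Function.leftLim xe s|) := by
          gcongr; exact abs_sub _ _
      _ ≤ |jmp x s| + 2 * ε := by linarith
  -- sup bound
  obtain ⟨M, hM⟩ := cadlag_bounded x hx t
  have hbdd : BddAbove (range fun u : Ioc (0:ℝ) t => |jmp x (u : ℝ)|) := by
    refine ⟨2 * M, ?_⟩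
    rintro v ⟨u, rfl⟩
    obtain ⟨upos, ult⟩ := u.2
    have hxu : |x (u : ℝ)| ≤ M := hM _ ⟨upos.le, ult⟩
    have hll : |Function.leftLim x (u : ℝ)| ≤ M := by
      refine le_of_tendsto (hx.2 _ upos).abs ?_
      filter_upwards [Ioo_mem_nhdsLT_of_mem (⟨upos, le_rfl⟩ : (u:ℝ) ∈ Ioc (0:ℝ) u)] with v hv
      exact hM v ⟨hv.1.le, hv.2.le.trans ult⟩
    calc |jmp x (u:ℝ)| ≤ |x (u:ℝ)| + |Function.leftLim x (u:ℝ)| := abs_sub _ _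
      _ ≤ 2 * M := by linarith
  have hle : |jmp x s| ≤ ⨆ u : Ioc (0:ℝ) t, |jmp x (u : ℝ)| :=
    le_ciSup hbdd (⟨s, spos, slet⟩ : Ioc (0:ℝ) t)
  -- final computation
  rw [hjump]
  calc |2 * ((x s - xe s) * jmp xe s)| = 2 * (|x s - xe s| * |jmp xe s|) := by
        rw [abs_mul, abs_mul, abs_of_nonneg (by norm_num : (0:ℝ) ≤ 2)]
    _ ≤ 2 * (ε * (|jmp x s| + 2 * ε)) := by
        have h1 : |x s - xe s| ≤ ε := happ s spos.le
        have := mul_le_mul h1 hjxe_bdd (abs_nonneg _) hε.le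
        linarith
    _ ≤ 2 * ε * ((⨆ u : Ioc (0:ℝ) t, |jmp x (u : ℝ)|) + 2 * ε) := by
        have := mul_le_mul_of_nonneg_left (add_le_add_right hle (2*ε)) hε.le
        nlinarith
end MainProof
end
end

section
/- Let x: [0,∞) → ℝ be càdlàg and let (x^ε)_{ε>0} be càdlàg paths of locally finite total variation with sup_{s≥0} |x_s − x^ε_s| ≤ ε. Suppose that the limit ⟨x⟩_t := 2 lim_{ε→0+} ∫_{(0,t]} (x_s − x^ε_s) dx^ε_s exists uniformly on compact subsets of [0,∞) and that C_t := sup_{ε>0} ∫_{(0,t]} |x_s − x^ε_s| |dx^ε_s| < ∞ for every t > 0. Then the total variation of t ↦ ⟨x⟩_t on [0,t] is at most 2 C_t; in particular ⟨x⟩ has locally finite total variation. -/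
open MeasureTheory Filter Topology Set
open scoped Classical

noncomputable section

lemma comp_measurable_of_countable_range {f h : ℝ → ℝ} (hh : Measurable h)
    (hc : (Set.range h).Countable) : Measurable (f ∘ h) := by
  intro B _
  have hB : (f ∘ h) ⁻¹' B = h ⁻¹' (Set.range h ∩ f ⁻¹' B) := by
    ext s
    simp [Function.comp]
  rw [hB]
  exact hh ((hc.mono inter_subset_left).measurableSet)

lemma measurable_rc {f : ℝ → ℝ} (hf : ∀ t : ℝ, 0 ≤ t → ContinuousWithinAt f (Ici t) t) :
    Measurable fun s => if 0 < s then f s else 0 := by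
  have hmeas : ∀ n : ℕ, Measurable fun s : ℝ =>
      if 0 < s then (f ∘ fun r : ℝ => (⌈r * 2 ^ n⌉ : ℝ) / 2 ^ n) s else 0 := by
    intro n
    have h1 : Measurable fun r : ℝ => (⌈r * 2 ^ n⌉ : ℝ) / 2 ^ n := by
      have : Measurable fun r : ℝ => (⌈r * 2 ^ n⌉ : ℤ) := (measurable_id.mul_const _).ceil
      exact ((Measurable.of_discrete (f := fun k : ℤ => (k : ℝ) / 2 ^ n)).comp this)
    have h2 : (Set.range fun r : ℝ => (⌈r * 2 ^ n⌉ : ℝ) / 2 ^ n).Countable := by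
      have : (Set.range fun r : ℝ => (⌈r * 2 ^ n⌉ : ℝ) / 2 ^ n) ⊆
          Set.range fun k : ℤ => (k : ℝ) / 2 ^ n := by
        rintro _ ⟨r, rfl⟩; exact ⟨⌈r * 2 ^ n⌉, rfl⟩
      exact (Set.countable_range _).mono this
    exact Measurable.ite measurableSet_Ioi (comp_measurable_of_countable_range h1 h2)
      measurable_const
  refine measurable_of_tendsto_metrizable hmeas ?_
  rw [tendsto_pi_nhds]
  intro s
  by_cases hs : 0 < s
  · simp only [if_pos hs, Function.comp]
    have hle : ∀ n : ℕ, s ≤ (⌈s * 2 ^ n⌉ : ℝ) / 2 ^ n := by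
      intro n
      rw [le_div_iff₀ (by positivity)]
      exact Int.le_ceil _
    have hge : ∀ n : ℕ, (⌈s * 2 ^ n⌉ : ℝ) / 2 ^ n ≤ s + (1/2) ^ n := by
      intro n
      rw [div_le_iff₀ (by positivity)]
      have := (Int.ceil_lt_add_one (s * 2 ^ n)).le
      calc (⌈s * 2 ^ n⌉ : ℝ) ≤ s * 2 ^ n + 1 := this
        _ = (s + (1/2)^n) * 2 ^ n := by
            rw [add_mul, ← mul_pow]; norm_num
    have htends : Tendsto (fun n : ℕ => (⌈s * 2 ^ n⌉ : ℝ) / 2 ^ n) atTop (𝓝 s) := by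
      have h0 : Tendsto (fun n : ℕ => s + (1/2 : ℝ) ^ n) atTop (𝓝 s) := by
        have := tendsto_pow_atTop_nhds_zero_of_lt_one (by norm_num : (0:ℝ) ≤ 1/2)
          (by norm_num : (1/2 : ℝ) < 1)
        simpa using tendsto_const_nhds.add this
      exact tendsto_of_tendsto_of_tendsto_of_le_of_le tendsto_const_nhds h0 hle hge
    have htends' : Tendsto (fun n : ℕ => (⌈s * 2 ^ n⌉ : ℝ) / 2 ^ n) atTop (𝓝[Ici s] s) :=
      tendsto_nhdsWithin_of_tendsto_nhds_of_eventually_within _ htends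
        (Eventually.of_forall fun n => hle n)
    exact (hf s hs.le).tendsto.comp htends'
  · simp only [if_neg hs]
    exact tendsto_const_nhds
lemma integrableOn_Ioc_of_bounded (f : StieltjesFunction ℝ) {g : ℝ → ℝ} {c : ℝ}
    (hg : Measurable fun s => if 0 < s then g s else 0)
    (hb : ∀ s, 0 ≤ s → |g s| ≤ c) {a b : ℝ} (ha : 0 ≤ a) :
    IntegrableOn g (Ioc a b) f.measure := by
  haveI hfin : IsFiniteMeasure (f.measure.restrict (Ioc a b)) := by
    constructor
    rw [Measure.restrict_apply_univ, f.measure_Ioc]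
    exact ENNReal.ofReal_lt_top
  have hae : g =ᵐ[f.measure.restrict (Ioc a b)] fun s => if 0 < s then g s else 0 := by
    filter_upwards [ae_restrict_mem measurableSet_Ioc] with s hs
    rw [if_pos (ha.trans_lt hs.1)]
  refine Integrable.mono' (integrable_const c) (hg.aestronglyMeasurable.congr hae.symm) ?_
  filter_upwards [ae_restrict_mem measurableSet_Ioc] with s hs
  simpa [Real.norm_eq_abs] using hb s (ha.trans_lt hs.1).le

section PairFun

variable (ρ σ : Measure ℝ) (T : Set ℝ) (c₀ : ℝ)

/-- auxiliary function built from a pair of measures -/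
def pairFun : ℝ → ℝ :=
  fun s => c₀ + ((ρ (T ∩ Ioc 0 s)).toReal - (σ (T ∩ Ioc 0 s)).toReal)

variable {ρ σ T}

lemma pairFun_diff (hT : MeasurableSet T)
    (hρ : ∀ b : ℝ, ρ (T ∩ Ioc 0 b) ≠ ⊤) (hσ : ∀ b : ℝ, σ (T ∩ Ioc 0 b) ≠ ⊤)
    {b c : ℝ} (hb : 0 ≤ b) (hbc : b ≤ c) :
    pairFun ρ σ T c₀ c - pairFun ρ σ T c₀ b
      = (ρ (T ∩ Ioc b c)).toReal - (σ (T ∩ Ioc b c)).toReal := by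
  have hsplit : ∀ μ : Measure ℝ, (∀ r : ℝ, μ (T ∩ Ioc 0 r) ≠ ⊤) →
      (μ (T ∩ Ioc 0 c)).toReal = (μ (T ∩ Ioc 0 b)).toReal + (μ (T ∩ Ioc b c)).toReal := by
    intro μ hμ
    have hset : T ∩ Ioc 0 c = (T ∩ Ioc 0 b) ∪ (T ∩ Ioc b c) := by
      rw [← Set.inter_union_distrib_left, Set.Ioc_union_Ioc_eq_Ioc hb hbc]
    have hd : Disjoint (T ∩ Ioc 0 b) (T ∩ Ioc b c) :=
      ((Set.Ioc_disjoint_Ioc_of_le le_rfl)).mono inter_subset_right inter_subset_right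
    have h1 : μ (T ∩ Ioc b c) ≠ ⊤ := by
      refine ne_top_of_le_ne_top (hμ c) (measure_mono (inter_subset_inter_right _ ?_))
      exact Set.Ioc_subset_Ioc_left hb
    have h2 : μ (T ∩ Ioc 0 b) ≠ ⊤ := hμ b
    rw [hset, measure_union hd (hT.inter measurableSet_Ioc), ENNReal.toReal_add h2 h1]
  have h1 := hsplit ρ hρ
  have h2 := hsplit σ hσ
  simp only [pairFun]
  linarith

lemma pairFun_mono (hT : MeasurableSet T)
    (hρ : ∀ b : ℝ, ρ (T ∩ Ioc 0 b) ≠ ⊤) (hσ : ∀ b : ℝ, σ (T ∩ Ioc 0 b) ≠ ⊤)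
    (hle : ∀ b c : ℝ, 0 ≤ b → σ (T ∩ Ioc b c) ≤ ρ (T ∩ Ioc b c)) :
    Monotone (pairFun ρ σ T c₀) := by
  have hmax : ∀ r : ℝ, pairFun ρ σ T c₀ r = pairFun ρ σ T c₀ (max r 0) := by
    intro r
    rcases le_total r 0 with hr | hr
    · simp only [pairFun]
      rw [max_eq_right hr, Set.Ioc_eq_empty (by simpa using hr), Set.Ioc_self]
    · rw [max_eq_left hr]
  intro s s' hss'
  rw [hmax s, hmax s']
  have h0 : (0:ℝ) ≤ max s 0 := le_max_right _ _
  have h1 : max s 0 ≤ max s' 0 := max_le_max hss' le_rfl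
  have hd := pairFun_diff c₀ hT hρ hσ h0 h1
  have hfin : ρ (T ∩ Ioc (max s 0) (max s' 0)) ≠ ⊤ := by
    refine ne_top_of_le_ne_top (hρ (max s' 0)) (measure_mono (inter_subset_inter_right _ ?_))
    exact Set.Ioc_subset_Ioc_left h0
  have := ENNReal.toReal_mono hfin (hle (max s 0) (max s' 0) h0)
  linarith

lemma pairFun_rightCont (hT : MeasurableSet T)
    (hρ : ∀ b : ℝ, ρ (T ∩ Ioc 0 b) ≠ ⊤) (hσ : ∀ b : ℝ, σ (T ∩ Ioc 0 b) ≠ ⊤)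
    (hle : ∀ b c : ℝ, 0 ≤ b → σ (T ∩ Ioc b c) ≤ ρ (T ∩ Ioc b c)) (x : ℝ) :
    ContinuousWithinAt (pairFun ρ σ T c₀) (Ici x) x := by
  set F := pairFun ρ σ T c₀ with hF
  have hmono : Monotone F := pairFun_mono c₀ hT hρ hσ hle
  have hseq : Tendsto (fun n : ℕ => F (x + 1 / (n + 1))) atTop (𝓝 (F x)) := by
    have hmeaslim : ∀ μ : Measure ℝ, (∀ r : ℝ, μ (T ∩ Ioc 0 r) ≠ ⊤) →
        Tendsto (fun n : ℕ => (μ (T ∩ Ioc 0 (x + 1 / (n + 1)))).toReal) atTop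
          (𝓝 ((μ (T ∩ Ioc 0 x)).toReal)) := by
      intro μ hμ
      have hiInter : ⋂ n : ℕ, T ∩ Ioc 0 (x + 1 / (n + 1)) = T ∩ Ioc 0 x := by
        ext r
        simp only [mem_iInter, mem_inter_iff, mem_Ioc]
        constructor
        · rintro h
          refine ⟨(h 0).1, (h 0).2.1, ?_⟩
          have hlim : Tendsto (fun n : ℕ => x + 1 / ((n : ℝ) + 1)) atTop (𝓝 x) := by
            simpa using tendsto_const_nhds.add (tendsto_one_div_add_atTop_nhds_zero_nat (𝕜 := ℝ))
          exact ge_of_tendsto hlim (Eventually.of_forall fun n => (h n).2.2)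
        · rintro ⟨h1, h2, h3⟩ n
          exact ⟨h1, h2, h3.trans (le_add_of_nonneg_right (by positivity))⟩
      have hanti : Antitone fun n : ℕ => T ∩ Ioc 0 (x + 1 / (n + 1)) := by
        intro n m hnm
        refine inter_subset_inter_right _ (Set.Ioc_subset_Ioc_right ?_)
        have : (1 : ℝ) / (m + 1) ≤ 1 / (n + 1) := by
          apply one_div_le_one_div_of_le (by positivity)
          exact_mod_cast Nat.add_le_add_right hnm 1
        linarith
      have h := tendsto_measure_iInter_atTop
        (fun n => (hT.inter measurableSet_Ioc).nullMeasurableSet) hanti ⟨0, hμ _⟩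
      rw [hiInter] at h
      exact (ENNReal.tendsto_toReal (hμ x)).comp h
    have h1 := hmeaslim ρ hρ
    have h2 := hmeaslim σ hσ
    simpa only [hF, pairFun] using tendsto_const_nhds.add (h1.sub h2)
  have hIoi := hmono.tendsto_nhdsGT x
  have hInf : sInf (F '' Ioi x) = F x := by
    apply le_antisymm
    · refine ge_of_tendsto hseq (Eventually.of_forall fun n => ?_)
      have hbdd : BddBelow (F '' Ioi x) := by
        refine ⟨F x, ?_⟩
        rintro y ⟨z, hz, rfl⟩
        exact hmono (le_of_lt hz)
      have hmem : F (x + 1 / (n + 1)) ∈ F '' Ioi x := by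
        refine ⟨x + 1 / (n + 1), ?_, rfl⟩
        simp only [mem_Ioi, lt_add_iff_pos_right]
        positivity
      exact csInf_le hbdd hmem
    · refine le_csInf ((nonempty_Ioi).image _) ?_
      rintro y ⟨z, hz, rfl⟩
      exact hmono hz.le
  rw [hInf] at hIoi
  have hIci : 𝓝[Ici x] x = pure x ⊔ 𝓝[Ioi x] x := by
    rw [← Set.Ioi_insert, nhdsWithin_insert]
  rw [ContinuousWithinAt, hIci]
  exact tendsto_sup.2 ⟨tendsto_pure_nhds F x, hIoi⟩

/-- Stieltjes function built from a pair of measures -/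
def pairStieltjes (hT : MeasurableSet T)
    (hρ : ∀ b : ℝ, ρ (T ∩ Ioc 0 b) ≠ ⊤) (hσ : ∀ b : ℝ, σ (T ∩ Ioc 0 b) ≠ ⊤)
    (hle : ∀ b c : ℝ, 0 ≤ b → σ (T ∩ Ioc b c) ≤ ρ (T ∩ Ioc b c)) : StieltjesFunction ℝ where
  toFun := pairFun ρ σ T c₀
  mono' := pairFun_mono c₀ hT hρ hσ hle
  right_continuous' := pairFun_rightCont c₀ hT hρ hσ hle

lemma pairStieltjes_measure_Ioc (hT : MeasurableSet T)
    (hρ : ∀ b : ℝ, ρ (T ∩ Ioc 0 b) ≠ ⊤) (hσ : ∀ b : ℝ, σ (T ∩ Ioc 0 b) ≠ ⊤)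
    (hle : ∀ b c : ℝ, 0 ≤ b → σ (T ∩ Ioc b c) ≤ ρ (T ∩ Ioc b c))
    {b c : ℝ} (hb : 0 ≤ b) (hbc : b ≤ c) :
    (pairStieltjes c₀ hT hρ hσ hle).measure (Ioc b c)
      = ρ (T ∩ Ioc b c) - σ (T ∩ Ioc b c) := by
  rw [StieltjesFunction.measure_Ioc]
  have hd : (pairStieltjes c₀ hT hρ hσ hle) c - (pairStieltjes c₀ hT hρ hσ hle) b
      = (ρ (T ∩ Ioc b c)).toReal - (σ (T ∩ Ioc b c)).toReal :=
    pairFun_diff c₀ hT hρ hσ hb hbc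
  have hfin : ρ (T ∩ Ioc b c) ≠ ⊤ := by
    refine ne_top_of_le_ne_top (hρ c) (measure_mono (inter_subset_inter_right _ ?_))
    exact Set.Ioc_subset_Ioc_left hb
  rw [hd, ← ENNReal.toReal_sub_of_le (hle b c hb) hfin,
    ENNReal.ofReal_toReal (ne_top_of_le_ne_top hfin tsub_le_self)]

end PairFun
lemma exists_nat_Ioc {r : ℝ} (hr : 0 < r) : ∃ n : ℕ, r ∈ Ioc (n : ℝ) (n + 1) := by
  refine ⟨⌈r⌉₊ - 1, ?_, ?_⟩
  · have h1 : 1 ≤ ⌈r⌉₊ := Nat.one_le_ceil_iff.2 hr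
    have h2 : (⌈r⌉₊ : ℝ) < r + 1 := Nat.ceil_lt_add_one hr.le
    have : ((⌈r⌉₊ - 1 : ℕ) : ℝ) = (⌈r⌉₊ : ℝ) - 1 := by
      rw [Nat.cast_sub h1]; norm_num
    rw [this]; linarith
  · have h1 : 1 ≤ ⌈r⌉₊ := Nat.one_le_ceil_iff.2 hr
    have : ((⌈r⌉₊ - 1 : ℕ) : ℝ) + 1 = (⌈r⌉₊ : ℝ) := by
      rw [Nat.cast_sub h1]; norm_num
    rw [this]; exact Nat.le_ceil r

lemma exists_minimal_decomp {y : ℝ → ℝ} (h : LocBV y) :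
    ∃ p, IsBVDecompOn y p ∧
      (p.1.measure.restrict (Ioi 0)).MutuallySingular (p.2.measure.restrict (Ioi 0)) := by
  obtain ⟨⟨u, v⟩, huv⟩ := h
  set μa := u.measure with hμa
  set μb := v.measure with hμb
  have hfinIoc : ∀ (w : StieltjesFunction ℝ) (a b : ℝ), w.measure (Ioc a b) ≠ ⊤ := by
    intro w a b; rw [w.measure_Ioc]; exact ENNReal.ofReal_ne_top
  -- Hahn decomposition on each Ioc n (n+1)
  have hhahn : ∀ n : ℕ, ∃ s : Set ℝ, MeasurableSet s ∧
      (∀ t, MeasurableSet t → t ⊆ s → μb (t ∩ Ioc (n : ℝ) (n + 1)) ≤ μa (t ∩ Ioc (n : ℝ) (n + 1))) ∧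
      (∀ t, MeasurableSet t → t ⊆ sᶜ →
        μa (t ∩ Ioc (n : ℝ) (n + 1)) ≤ μb (t ∩ Ioc (n : ℝ) (n + 1))) := by
    intro n
    haveI h1 : IsFiniteMeasure (μa.restrict (Ioc (n : ℝ) (n + 1))) :=
      ⟨by rw [Measure.restrict_apply_univ]; exact (hfinIoc u _ _).lt_top⟩
    haveI h2 : IsFiniteMeasure (μb.restrict (Ioc (n : ℝ) (n + 1))) :=
      ⟨by rw [Measure.restrict_apply_univ]; exact (hfinIoc v _ _).lt_top⟩
    obtain ⟨s, hs, hle1, hle2⟩ := hahn_decomposition (μ := μa.restrict (Ioc (n : ℝ) (n + 1)))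
      (ν := μb.restrict (Ioc (n : ℝ) (n + 1)))
    refine ⟨s, hs, fun t ht hts => ?_, fun t ht hts => ?_⟩
    · simpa [Measure.restrict_apply ht] using hle1 t ht hts
    · simpa [Measure.restrict_apply ht] using hle2 t ht hts
  choose s hsm hs1 hs2 using hhahn
  set S : Set ℝ := ⋃ n : ℕ, s n ∩ Ioc (n : ℝ) (n + 1) with hSdef
  have hSm : MeasurableSet S := MeasurableSet.iUnion fun n => (hsm n).inter measurableSet_Ioc
  have hIocdisj : ∀ i j : ℕ, i ≠ j → Disjoint (Ioc (i : ℝ) (i + 1)) (Ioc (j : ℝ) (j + 1)) := by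
    intro i j hij
    rw [Set.Ioc_disjoint_Ioc]
    rcases hij.lt_or_gt with hlt | hlt
    · have : (i : ℝ) + 1 ≤ (j : ℝ) := by exact_mod_cast Nat.succ_le_of_lt hlt
      exact le_trans (min_le_left _ _) (le_trans this (le_max_right _ _))
    · have : (j : ℝ) + 1 ≤ (i : ℝ) := by exact_mod_cast Nat.succ_le_of_lt hlt
      exact le_trans (min_le_right _ _) (le_trans this (le_max_left _ _))
  have hcover' : ∀ E : Set ℝ, E ⊆ Ioi 0 →
      Sᶜ ∩ E = ⋃ n : ℕ, ((s n)ᶜ ∩ Ioc (n : ℝ) (n + 1)) ∩ E := by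
    intro E hE
    ext r
    constructor
    · rintro ⟨hrS, hrE⟩
      obtain ⟨n, hn⟩ := exists_nat_Ioc (hE hrE)
      refine mem_iUnion.2 ⟨n, ⟨⟨fun hrs => hrS (mem_iUnion.2 ⟨n, hrs, hn⟩), hn⟩, hrE⟩⟩
    · intro hr
      obtain ⟨n, ⟨⟨hns, hn⟩, hrE⟩⟩ := mem_iUnion.1 hr
      refine ⟨fun hrS => ?_, hrE⟩
      obtain ⟨m, hms, hm⟩ := mem_iUnion.1 hrS
      rcases eq_or_ne m n with rfl | hmn
      · exact hns hms
      · exact (hIocdisj m n hmn).ne_of_mem hm hn rfl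
  have hkey1 : ∀ E : Set ℝ, MeasurableSet E → μb (S ∩ E) ≤ μa (S ∩ E) := by
    intro E hEm
    rw [hSdef, Set.iUnion_inter]
    have hdisj : Pairwise (Function.onFun Disjoint fun n : ℕ => s n ∩ Ioc (n : ℝ) (n + 1) ∩ E) :=
      fun i j hij => ((hIocdisj i j hij).mono
        (inter_subset_right.trans' inter_subset_left)
        (inter_subset_right.trans' inter_subset_left)).mono
        le_rfl le_rfl
    have hm : ∀ n : ℕ, MeasurableSet (s n ∩ Ioc (n : ℝ) (n + 1) ∩ E) :=
      fun n => ((hsm n).inter measurableSet_Ioc).inter hEm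
    rw [measure_iUnion hdisj hm, measure_iUnion hdisj hm]
    refine ENNReal.tsum_le_tsum fun n => ?_
    have hsub : s n ∩ Ioc (n : ℝ) (n + 1) ∩ E ⊆ s n :=
      inter_subset_left.trans inter_subset_left
    have hIn : s n ∩ Ioc (n : ℝ) (n + 1) ∩ E ∩ Ioc (n : ℝ) (n + 1)
        = s n ∩ Ioc (n : ℝ) (n + 1) ∩ E :=
      inter_eq_left.2 fun r hr => hr.1.2
    have := hs1 n _ (hm n) hsub
    rwa [hIn] at this
  have hkey2 : ∀ E : Set ℝ, MeasurableSet E → E ⊆ Ioi 0 → μa (Sᶜ ∩ E) ≤ μb (Sᶜ ∩ E) := by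
    intro E hEm hE
    rw [hcover' E hE]
    have hdisj : Pairwise (Function.onFun Disjoint
        fun n : ℕ => (s n)ᶜ ∩ Ioc (n : ℝ) (n + 1) ∩ E) :=
      fun i j hij => ((hIocdisj i j hij).mono
        (inter_subset_right.trans' inter_subset_left)
        (inter_subset_right.trans' inter_subset_left)).mono
        le_rfl le_rfl
    have hm : ∀ n : ℕ, MeasurableSet ((s n)ᶜ ∩ Ioc (n : ℝ) (n + 1) ∩ E) :=
      fun n => ((hsm n).compl.inter measurableSet_Ioc).inter hEm
    rw [measure_iUnion hdisj hm, measure_iUnion hdisj hm]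
    refine ENNReal.tsum_le_tsum fun n => ?_
    have hsub : (s n)ᶜ ∩ Ioc (n : ℝ) (n + 1) ∩ E ⊆ (s n)ᶜ :=
      inter_subset_left.trans inter_subset_left
    have hIn : (s n)ᶜ ∩ Ioc (n : ℝ) (n + 1) ∩ E ∩ Ioc (n : ℝ) (n + 1)
        = (s n)ᶜ ∩ Ioc (n : ℝ) (n + 1) ∩ E :=
      inter_eq_left.2 fun r hr => hr.1.2
    have := hs2 n _ (hm n) hsub
    rwa [hIn] at this
  -- finiteness
  have hfa : ∀ (T' : Set ℝ) (b : ℝ), μa (T' ∩ Ioc 0 b) ≠ ⊤ := fun T' b =>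
    ne_top_of_le_ne_top (hfinIoc u 0 b) (measure_mono inter_subset_right)
  have hfb : ∀ (T' : Set ℝ) (b : ℝ), μb (T' ∩ Ioc 0 b) ≠ ⊤ := fun T' b =>
    ne_top_of_le_ne_top (hfinIoc v 0 b) (measure_mono inter_subset_right)
  have hle1 : ∀ b c : ℝ, 0 ≤ b → μb (S ∩ Ioc b c) ≤ μa (S ∩ Ioc b c) :=
    fun b c hb => hkey1 _ measurableSet_Ioc
  have hle2 : ∀ b c : ℝ, 0 ≤ b → μa (Sᶜ ∩ Ioc b c) ≤ μb (Sᶜ ∩ Ioc b c) :=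
    fun b c hb => hkey2 _ measurableSet_Ioc (fun r hr => hb.trans_lt hr.1)
  set F₁ : StieltjesFunction ℝ := pairStieltjes (y 0) hSm (hfa S) (hfb S) hle1 with hF₁
  set F₂ : StieltjesFunction ℝ := pairStieltjes 0 hSm.compl (hfb Sᶜ) (hfa Sᶜ) hle2 with hF₂
  refine ⟨(F₁, F₂), ?_, ?_⟩
  · -- decomposition
    intro r hr
    have hsplit : ∀ (w : StieltjesFunction ℝ),
        (w.measure (S ∩ Ioc 0 r)).toReal + (w.measure (Sᶜ ∩ Ioc 0 r)).toReal
          = w r - w 0 := by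
      intro w
      have h1 : w.measure (Ioc 0 r ∩ S) + w.measure (Ioc 0 r \ S) = w.measure (Ioc 0 r) :=
        measure_inter_add_diff _ hSm
      have h2 : Ioc 0 r \ S = Sᶜ ∩ Ioc 0 r := by rw [diff_eq, inter_comm]
      have h3 : Ioc 0 r ∩ S = S ∩ Ioc 0 r := inter_comm _ _
      rw [h2, h3] at h1
      have hf1 : w.measure (S ∩ Ioc 0 r) ≠ ⊤ :=
        ne_top_of_le_ne_top (hfinIoc w 0 r) (measure_mono inter_subset_right)
      have hf2 : w.measure (Sᶜ ∩ Ioc 0 r) ≠ ⊤ :=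
        ne_top_of_le_ne_top (hfinIoc w 0 r) (measure_mono inter_subset_right)
      have := ENNReal.toReal_add hf1 hf2
      rw [← this, h1, w.measure_Ioc, ENNReal.toReal_ofReal (sub_nonneg.2 (w.mono hr))]
    have ha := hsplit u
    have hb' := hsplit v
    have hyr := huv r hr
    have hy0 := huv 0 le_rfl
    show y r = pairFun μa μb S (y 0) r - pairFun μb μa Sᶜ 0 r
    simp only [pairFun]
    linarith
  · -- mutual singularity
    have hmeasA : F₁.measure.restrict (Ioi 0) + μb.restrict (S ∩ Ioi 0)
        = μa.restrict (S ∩ Ioi 0) := by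
      refine Measure.ext_of_Ioc' _ _ (fun a b hab => ?_) (fun a b hab => ?_)
      · rw [Measure.add_apply, Measure.restrict_apply measurableSet_Ioc,
          Measure.restrict_apply measurableSet_Ioc]
        exact ENNReal.add_ne_top.2
          ⟨ne_top_of_le_ne_top (hfinIoc F₁ a b) (measure_mono inter_subset_left),
           ne_top_of_le_ne_top (hfinIoc v a b) (measure_mono inter_subset_left)⟩
      · simp only [Measure.add_apply, Measure.restrict_apply measurableSet_Ioc]
        have hI1 : Ioc a b ∩ Ioi 0 = Ioc (max a 0) b := by
          ext r; simp only [mem_inter_iff, mem_Ioc, mem_Ioi, max_lt_iff]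
          constructor
          · rintro ⟨⟨h1, h2⟩, h3⟩; exact ⟨⟨h1, h3⟩, h2⟩
          · rintro ⟨⟨h1, h3⟩, h2⟩; exact ⟨⟨h1, h2⟩, h3⟩
        have hI2 : Ioc a b ∩ (S ∩ Ioi 0) = S ∩ Ioc (max a 0) b := by
          rw [← hI1]; ext r; simp only [mem_inter_iff, mem_Ioc, mem_Ioi]; tauto
        rw [hI1, hI2]
        rcases le_or_gt b (max a 0) with hba | hab'
        · rw [Set.Ioc_eq_empty (not_lt.2 hba)]
          simp
        · rw [pairStieltjes_measure_Ioc (y 0) hSm (hfa S) (hfb S) hle1 (le_max_right a 0) hab'.le]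
          exact tsub_add_cancel_of_le (hle1 (max a 0) b (le_max_right a 0))
    have hmeasB : F₂.measure.restrict (Ioi 0) + μa.restrict (Sᶜ ∩ Ioi 0)
        = μb.restrict (Sᶜ ∩ Ioi 0) := by
      refine Measure.ext_of_Ioc' _ _ (fun a b hab => ?_) (fun a b hab => ?_)
      · rw [Measure.add_apply, Measure.restrict_apply measurableSet_Ioc,
          Measure.restrict_apply measurableSet_Ioc]
        exact ENNReal.add_ne_top.2
          ⟨ne_top_of_le_ne_top (hfinIoc F₂ a b) (measure_mono inter_subset_left),
           ne_top_of_le_ne_top (hfinIoc u a b) (measure_mono inter_subset_left)⟩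
      · simp only [Measure.add_apply, Measure.restrict_apply measurableSet_Ioc]
        have hI1 : Ioc a b ∩ Ioi 0 = Ioc (max a 0) b := by
          ext r; simp only [mem_inter_iff, mem_Ioc, mem_Ioi, max_lt_iff]
          constructor
          · rintro ⟨⟨h1, h2⟩, h3⟩; exact ⟨⟨h1, h3⟩, h2⟩
          · rintro ⟨⟨h1, h3⟩, h2⟩; exact ⟨⟨h1, h2⟩, h3⟩
        have hI2 : Ioc a b ∩ (Sᶜ ∩ Ioi 0) = Sᶜ ∩ Ioc (max a 0) b := by
          rw [← hI1]; ext r; simp only [mem_inter_iff, mem_Ioc, mem_Ioi]; tauto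
        rw [hI1, hI2]
        rcases le_or_gt b (max a 0) with hba | hab'
        · rw [Set.Ioc_eq_empty (not_lt.2 hba)]
          simp
        · rw [pairStieltjes_measure_Ioc 0 hSm.compl (hfb Sᶜ) (hfa Sᶜ) hle2
            (le_max_right a 0) hab'.le]
          exact tsub_add_cancel_of_le (hle2 (max a 0) b (le_max_right a 0))
    refine ⟨Sᶜ, hSm.compl, ?_, ?_⟩
    · show (F₁.measure.restrict (Ioi 0)) Sᶜ = 0
      have h1 : (F₁.measure.restrict (Ioi 0)) Sᶜ + (μb.restrict (S ∩ Ioi 0)) Sᶜ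
          = (μa.restrict (S ∩ Ioi 0)) Sᶜ := by
        rw [← Measure.add_apply, hmeasA]
      simp only [Measure.restrict_apply hSm.compl] at h1 ⊢
      have h2 : Sᶜ ∩ (S ∩ Ioi 0) = ∅ := by
        ext r; simp only [mem_inter_iff, mem_compl_iff, mem_empty_iff_false]; tauto
      rw [h2, measure_empty] at h1
      simpa using h1
    · show (F₂.measure.restrict (Ioi 0)) Sᶜᶜ = 0
      rw [compl_compl]
      have h1 : (F₂.measure.restrict (Ioi 0)) S + (μa.restrict (Sᶜ ∩ Ioi 0)) S
          = (μb.restrict (Sᶜ ∩ Ioi 0)) S := by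
        rw [← Measure.add_apply, hmeasB]
      simp only [Measure.restrict_apply hSm] at h1 ⊢
      have h2 : S ∩ (Sᶜ ∩ Ioi 0) = ∅ := by
        ext r; simp only [mem_inter_iff, mem_compl_iff, mem_empty_iff_false]; tauto
      rw [h2, measure_empty] at h1
      simpa using h1
lemma lsAbs_nonneg (y g : ℝ → ℝ) (t : ℝ) : 0 ≤ lsAbs y g t := by
  unfold lsAbs
  split
  · exact integral_nonneg fun s => abs_nonneg _
  · exact le_refl 0

lemma key_bound (x xe : ℝ → ℝ)
    (hxm : Measurable fun s => if 0 < s then x s else 0)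
    (hxem : Measurable fun s => if 0 < s then xe s else 0)
    {ε : ℝ} (hε : 0 < ε) (hbvε : LocBV xe)
    (happε : ∀ s : ℝ, 0 ≤ s → |x s - xe s| ≤ ε)
    {t : ℝ} (ht : 0 < t)
    (n : ℕ) (u : ℕ → ℝ) (hu : Monotone u) (hus : ∀ i, u i ∈ Icc 0 t) :
    ∑ i ∈ Finset.range n, |lsInt xe (fun r => x r - xe r) (u (i + 1)) -
        lsInt xe (fun r => x r - xe r) (u i)| ≤ lsAbs xe (fun r => x r - xe r) t := by
  set g : ℝ → ℝ := fun r => x r - xe r with hgdef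
  have hgm : Measurable fun s => if 0 < s then g s else 0 := by
    have h := hxm.sub hxem
    have heq : (fun s => if 0 < s then g s else 0)
        = fun s => (if 0 < s then x s else 0) - if 0 < s then xe s else 0 := by
      funext s; by_cases hs : 0 < s <;> simp [hgdef, hs]
    rw [heq]; exact h
  have hEx : ∃ p, IsBVDecompOn xe p := hbvε
  have hExm : ∃ p, IsBVDecompOn xe p ∧
      (p.1.measure.restrict (Ioi 0)).MutuallySingular (p.2.measure.restrict (Ioi 0)) :=
    exists_minimal_decomp hbvε
  have hp' : IsBVDecompOn xe hEx.choose := hEx.choose_spec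
  have hpm : IsBVDecompOn xe hExm.choose := hExm.choose_spec.1
  have hint : ∀ (w : StieltjesFunction ℝ) (a b : ℝ), 0 ≤ a → IntegrableOn g (Ioc a b) w.measure :=
    fun w a b ha => integrableOn_Ioc_of_bounded w hgm (fun s hs => happε s hs) ha
  have hfinIoc : ∀ (w : StieltjesFunction ℝ) (a b : ℝ), w.measure (Ioc a b) ≠ ⊤ := by
    intro w a b; rw [w.measure_Ioc]; exact ENNReal.ofReal_ne_top
  -- measure exchange
  have hmeq : ∀ c d : ℝ, 0 ≤ c →
      hEx.choose.1.measure (Ioc c d) + hExm.choose.2.measure (Ioc c d)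
        = hExm.choose.1.measure (Ioc c d) + hEx.choose.2.measure (Ioc c d) := by
    intro c d hc
    rcases le_or_gt d c with hdc | hcd
    · rw [Set.Ioc_eq_empty (not_lt.2 hdc)]; simp
    · simp only [StieltjesFunction.measure_Ioc]
      have h1 := hp' c hc
      have h2 := hp' d (hc.trans hcd.le)
      have h3 := hpm c hc
      have h4 := hpm d (hc.trans hcd.le)
      rw [← ENNReal.ofReal_add (sub_nonneg.2 (hEx.choose.1.mono hcd.le))
          (sub_nonneg.2 (hExm.choose.2.mono hcd.le)),
        ← ENNReal.ofReal_add (sub_nonneg.2 (hExm.choose.1.mono hcd.le))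
          (sub_nonneg.2 (hEx.choose.2.mono hcd.le))]
      congr 1
      linarith
  have hrest : ∀ a b : ℝ, 0 ≤ a →
      (hEx.choose.1.measure + hExm.choose.2.measure).restrict (Ioc a b)
        = (hExm.choose.1.measure + hEx.choose.2.measure).restrict (Ioc a b) := by
    intro a b ha
    refine Measure.ext_of_Ioc' _ _ (fun c d hcd => ?_) (fun c d hcd => ?_)
    · rw [Measure.restrict_apply measurableSet_Ioc, Measure.add_apply]
      exact ENNReal.add_ne_top.2
        ⟨ne_top_of_le_ne_top (hfinIoc _ c d) (measure_mono inter_subset_left),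
         ne_top_of_le_ne_top (hfinIoc _ c d) (measure_mono inter_subset_left)⟩
    · rw [Measure.restrict_apply measurableSet_Ioc, Measure.restrict_apply measurableSet_Ioc,
        Set.Ioc_inter_Ioc]
      exact hmeq _ _ (le_trans ha (le_max_right c a))
  have hdiff : ∀ a b : ℝ, 0 ≤ a → a ≤ b →
      lsInt xe g b - lsInt xe g a
        = (∫ s in Ioc a b, g s ∂(hExm.choose.1.measure))
          - ∫ s in Ioc a b, g s ∂(hExm.choose.2.measure) := by
    intro a b ha hab
    have hsplit : ∀ w : StieltjesFunction ℝ,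
        ∫ s in Ioc 0 b, g s ∂w.measure
          = (∫ s in Ioc 0 a, g s ∂w.measure) + ∫ s in Ioc a b, g s ∂w.measure := by
      intro w
      rw [← Set.Ioc_union_Ioc_eq_Ioc ha hab,
        setIntegral_union (Set.Ioc_disjoint_Ioc_of_le le_rfl) measurableSet_Ioc
          (hint w 0 a le_rfl) (hint w a b ha)]
    have hex : (∫ s in Ioc a b, g s ∂(hEx.choose.1.measure))
          + ∫ s in Ioc a b, g s ∂(hExm.choose.2.measure)
        = (∫ s in Ioc a b, g s ∂(hExm.choose.1.measure))
          + ∫ s in Ioc a b, g s ∂(hEx.choose.2.measure) := by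
      have e12 : ∫ s in Ioc a b, g s ∂(hEx.choose.1.measure + hExm.choose.2.measure)
          = (∫ s in Ioc a b, g s ∂(hEx.choose.1.measure))
            + ∫ s in Ioc a b, g s ∂(hExm.choose.2.measure) := by
        rw [Measure.restrict_add]
        exact integral_add_measure (hint _ a b ha) (hint _ a b ha)
      have e34 : ∫ s in Ioc a b, g s ∂(hExm.choose.1.measure + hEx.choose.2.measure)
          = (∫ s in Ioc a b, g s ∂(hExm.choose.1.measure))
            + ∫ s in Ioc a b, g s ∂(hEx.choose.2.measure) := by
        rw [Measure.restrict_add]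
        exact integral_add_measure (hint _ a b ha) (hint _ a b ha)
      rw [← e12, ← e34]
      unfold g
      rw [hrest a b ha]
    unfold lsInt
    simp only [dif_pos hEx]
    have h1 := hsplit hEx.choose.1
    have h2 := hsplit hEx.choose.2
    linarith
  -- sum bound
  have hsum : ∀ w : StieltjesFunction ℝ,
      ∑ i ∈ Finset.range n, ∫ s in Ioc (u i) (u (i + 1)), |g s| ∂w.measure
        ≤ ∫ s in Ioc 0 t, |g s| ∂w.measure := by
    intro w
    have habs_int : ∀ a b : ℝ, 0 ≤ a → IntegrableOn (fun s => |g s|) (Ioc a b) w.measure :=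
      fun a b ha => (hint w a b ha).abs
    have hd : (↑(Finset.range n) : Set ℕ).Pairwise
        (Function.onFun Disjoint fun i => Ioc (u i) (u (i + 1))) := by
      intro i _ j _ hij
      rw [Function.onFun, Set.Ioc_disjoint_Ioc]
      rcases hij.lt_or_gt with hlt | hlt
      · exact le_trans (min_le_left _ _) (le_trans (hu hlt) (le_max_right _ _))
      · exact le_trans (min_le_right _ _) (le_trans (hu hlt) (le_max_left _ _))
    rw [← MeasureTheory.integral_biUnion_finset (Finset.range n)
      (fun i _ => measurableSet_Ioc) hd (fun i _ => habs_int _ _ (hus i).1)]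
    refine setIntegral_mono_set (habs_int 0 t le_rfl)
      (Eventually.of_forall fun s => abs_nonneg _) (HasSubset.Subset.eventuallyLE ?_)
    exact Set.iUnion₂_subset fun i _ => Set.Ioc_subset_Ioc (hus i).1 (hus (i + 1)).2
  calc ∑ i ∈ Finset.range n, |lsInt xe g (u (i + 1)) - lsInt xe g (u i)|
      ≤ ∑ i ∈ Finset.range n,
          ((∫ s in Ioc (u i) (u (i + 1)), |g s| ∂(hExm.choose.1.measure))
            + ∫ s in Ioc (u i) (u (i + 1)), |g s| ∂(hExm.choose.2.measure)) := by
        refine Finset.sum_le_sum fun i _ => ?_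
        rw [hdiff (u i) (u (i + 1)) (hus i).1 (hu (Nat.le_succ i))]
        refine (abs_sub _ _).trans (add_le_add ?_ ?_) <;>
        · simpa only [Real.norm_eq_abs] using norm_integral_le_integral_norm g
    _ = (∑ i ∈ Finset.range n, ∫ s in Ioc (u i) (u (i + 1)), |g s| ∂(hExm.choose.1.measure))
        + ∑ i ∈ Finset.range n, ∫ s in Ioc (u i) (u (i + 1)), |g s| ∂(hExm.choose.2.measure) :=
        Finset.sum_add_distrib
    _ ≤ (∫ s in Ioc 0 t, |g s| ∂(hExm.choose.1.measure))
        + ∫ s in Ioc 0 t, |g s| ∂(hExm.choose.2.measure) :=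
        add_le_add (hsum _) (hsum _)
    _ = ∫ s in Ioc 0 t, |g s| ∂(hExm.choose.1.measure + hExm.choose.2.measure) := by
        rw [Measure.restrict_add]
        exact (integral_add_measure ((hint _ 0 t le_rfl).abs) ((hint _ 0 t le_rfl).abs)).symm
    _ = lsAbs xe g t := by
        unfold lsAbs
        rw [dif_pos hExm]

/-- the total variation of `⟨x⟩` on `[0,t]` is at most
`2 C_t = 2 sup_{ε>0} ∫_{(0,t]} |x - xᵉ| |dxᵉ|`; in particular `⟨x⟩` has finite total
variation on `[0,t]`. -/
theorem statement6 (x : ℝ → ℝ) (xe : ℝ → ℝ → ℝ) (q : ℝ → ℝ)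
    (hx : Cadlag x)
    (hcad : ∀ ε : ℝ, 0 < ε → Cadlag (xe ε))
    (hbv : ∀ ε : ℝ, 0 < ε → LocBV (xe ε))
    (happ : ∀ ε : ℝ, 0 < ε → ∀ s : ℝ, 0 ≤ s → |x s - xe ε s| ≤ ε)
    (hq : ∀ T : ℝ, 0 ≤ T →
      TendstoUniformlyOn (fun ε s => 2 * lsInt (xe ε) (fun r => x r - xe ε r) s) q
        (𝓝[>] 0) (Icc 0 T))
    (t : ℝ) (ht : 0 < t) (C : ℝ)
    (hC : ∀ ε : ℝ, 0 < ε → lsAbs (xe ε) (fun r => x r - xe ε r) t ≤ C) :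
    eVariationOn q (Icc 0 t) ≤ ENNReal.ofReal (2 * C) ∧
      BoundedVariationOn q (Icc 0 t) := by
  have hxm : Measurable fun s => if 0 < s then x s else 0 := measurable_rc hx.1
  have hbound : eVariationOn q (Icc 0 t) ≤ ENNReal.ofReal (2 * C) := by
    unfold eVariationOn
    refine iSup_le ?_
    rintro ⟨n, u, hu, hus⟩
    have hreal : ∑ i ∈ Finset.range n, |q (u (i + 1)) - q (u i)| ≤ 2 * C := by
      have hten : Tendsto (fun ε : ℝ => ∑ i ∈ Finset.range n,
          |2 * lsInt (xe ε) (fun r => x r - xe ε r) (u (i + 1))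
            - 2 * lsInt (xe ε) (fun r => x r - xe ε r) (u i)|)
          (𝓝[>] (0 : ℝ)) (𝓝 (∑ i ∈ Finset.range n, |q (u (i + 1)) - q (u i)|)) := by
        refine tendsto_finset_sum _ fun i _ => ?_
        have h1 := (hq t ht.le).tendsto_at (hus (i + 1))
        have h2 := (hq t ht.le).tendsto_at (hus i)
        exact (h1.sub h2).abs
      refine le_of_tendsto hten ?_
      filter_upwards [self_mem_nhdsWithin] with ε hε
      have hεpos : (0 : ℝ) < ε := hε
      have hkey := key_bound x (xe ε) hxm (measurable_rc (hcad ε hεpos).1) hεpos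
        (hbv ε hεpos) (fun s hs => happ ε hεpos s hs) ht n u hu hus
      calc ∑ i ∈ Finset.range n,
            |2 * lsInt (xe ε) (fun r => x r - xe ε r) (u (i + 1))
              - 2 * lsInt (xe ε) (fun r => x r - xe ε r) (u i)|
          = 2 * ∑ i ∈ Finset.range n, |lsInt (xe ε) (fun r => x r - xe ε r) (u (i + 1))
              - lsInt (xe ε) (fun r => x r - xe ε r) (u i)| := by
            rw [Finset.mul_sum]
            refine Finset.sum_congr rfl fun i _ => ?_
            rw [← mul_sub, abs_mul]
            norm_num
        _ ≤ 2 * lsAbs (xe ε) (fun r => x r - xe ε r) t := by linarith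
        _ ≤ 2 * C := by linarith [hC ε hεpos]
    calc ∑ i ∈ Finset.range n, edist (q (u (i + 1))) (q (u i))
        = ENNReal.ofReal (∑ i ∈ Finset.range n, |q (u (i + 1)) - q (u i)|) := by
          rw [ENNReal.ofReal_sum_of_nonneg fun i _ => abs_nonneg _]
          exact Finset.sum_congr rfl fun i _ => by rw [edist_dist, Real.dist_eq]
      _ ≤ ENNReal.ofReal (2 * C) := ENNReal.ofReal_le_ofReal hreal
  exact ⟨hbound, ne_top_of_le_ne_top ENNReal.ofReal_ne_top hbound⟩
end
end

section
/- Let x: [0,∞) → ℝ be càdlàg with Σ_{0<s≤t} (Δx_s)² < ∞ for a fixed t > 0, let (x^ε)_{ε>0} be càdlàg paths with sup_{s≥0} |x_s − x^ε_s| ≤ ε and |Δx^ε_s| ≤ K |Δx_s| for all s > 0 and ε > 0 and some constant K, and let f: ℝ → ℝ be continuously differentiable with antiderivative F. Then each of the sums below converges absolutely and Σ_{0<s≤t} ( F(x^ε_s) − F(x^ε_{s−}) − f(x^ε_s) Δx^ε_s ) → Σ_{0<s≤t} ( F(x_s) − F(x_{s−}) − f(x_s) Δx_s ) as ε → 0+.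 -/
open MeasureTheory Filter Topology Set
open scoped Classical

noncomputable section

/-- A càdlàg path is bounded on a compact interval. -/
lemma cadlag_bdd {g : ℝ → ℝ} (hg : Cadlag g) {t : ℝ} (ht : 0 ≤ t) :
    ∃ M : ℝ, 0 ≤ M ∧ ∀ s ∈ Icc (0:ℝ) t, |g s| ≤ M := by
  have key : ∀ s ∈ Icc (0:ℝ) t, ∃ U ∈ 𝓝 s,
      ∀ r ∈ U ∩ Icc (0:ℝ) t, |g r| ≤ max |g s| |Function.leftLim g s| + 1 := by
    intro s hs
    rcases eq_or_lt_of_le hs.1 with h0 | h0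
    · -- s = 0
      subst h0
      have h1 : ∀ᶠ r in 𝓝[≥] (0:ℝ), |g r| < |g 0| + 1 :=
        ((continuous_abs.tendsto _).comp (hg.1 0 le_rfl)).eventually_lt_const
          (lt_add_of_pos_right _ one_pos)
      rw [eventually_iff, mem_nhdsWithin] at h1
      obtain ⟨U, hUo, hU0, hU⟩ := h1
      refine ⟨U, hUo.mem_nhds hU0, fun r hr => ?_⟩
      have : r ∈ {r | |g r| < |g 0| + 1} := hU ⟨hr.1, hr.2.1⟩
      exact this.le.trans (add_le_add_left (le_max_left _ _) 1)
    · -- s > 0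
      have h1 : ∀ᶠ r in 𝓝[<] s, |g r| < |Function.leftLim g s| + 1 :=
        ((continuous_abs.tendsto _).comp (hg.2 s h0)).eventually_lt_const
          (lt_add_of_pos_right _ one_pos)
      have h2 : ∀ᶠ r in 𝓝[≥] s, |g r| < |g s| + 1 :=
        ((continuous_abs.tendsto _).comp (hg.1 s hs.1)).eventually_lt_const
          (lt_add_of_pos_right _ one_pos)
      rw [eventually_iff, mem_nhdsWithin] at h1 h2
      obtain ⟨U₁, hU₁o, hU₁s, hU₁⟩ := h1
      obtain ⟨U₂, hU₂o, hU₂s, hU₂⟩ := h2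
      refine ⟨U₁ ∩ U₂, (hU₁o.inter hU₂o).mem_nhds ⟨hU₁s, hU₂s⟩, fun r hr => ?_⟩
      rcases lt_or_ge r s with h | h
      · exact (hU₁ ⟨hr.1.1, h⟩).le.trans (add_le_add_left (le_max_right _ _) 1)
      · exact (hU₂ ⟨hr.1.2, h⟩).le.trans (add_le_add_left (le_max_left _ _) 1)
  choose! U hU hUb using key
  obtain ⟨fs, hfs⟩ := (isCompact_Icc : IsCompact (Icc (0:ℝ) t)).elim_nhds_subcover'
    (fun s hs => U s) (fun s hs => hU s hs)
  have hne : fs.Nonempty := by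
    rcases fs.eq_empty_or_nonempty with h | h
    · exfalso
      have := hfs (left_mem_Icc.2 ht)
      simp [h] at this
    · exact h
  set C : ℝ → ℝ := fun s => max |g s| |Function.leftLim g s| + 1 with hC
  refine ⟨max (fs.sup' hne (fun i => C (i:ℝ))) 0, le_max_right _ _, fun s hs => ?_⟩
  rcases Set.mem_iUnion₂.1 (hfs hs) with ⟨i, hifs, hiU⟩
  calc |g s| ≤ C i := hUb i i.2 s ⟨hiU, hs⟩
    _ ≤ fs.sup' hne (fun i => C (i:ℝ)) := Finset.le_sup' (s := fs) (f := fun i => C (i:ℝ)) hifs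
    _ ≤ _ := le_max_left _ _

/-- Taylor estimate: `|F b - F a - f b (b-a)| ≤ M (b-a)²` if `|f'| ≤ M` on `[a,b]`. -/
lemma taylor_est {f f' F : ℝ → ℝ} (hf : ∀ y, HasDerivAt f (f' y) y)
    (hF : ∀ y, HasDerivAt F (f y) y) {M a b : ℝ}
    (hM : ∀ y ∈ uIcc a b, |f' y| ≤ M) :
    |F b - F a - f b * (b - a)| ≤ M * (b - a) ^ 2 := by
  have hM0 : 0 ≤ M := (abs_nonneg _).trans (hM b right_mem_uIcc)
  have hfb : ∀ y ∈ uIcc a b, |f y - f b| ≤ M * |b - a| := by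
    intro y hy
    have h1 : |f y - f b| ≤ M * |y - b| := by
      simpa [Real.norm_eq_abs] using
        (convex_uIcc a b).norm_image_sub_le_of_norm_hasDerivWithin_le
          (fun z _ => (hf z).hasDerivWithinAt)
          (fun z hz => by simpa [Real.norm_eq_abs] using hM z hz)
          right_mem_uIcc hy
    have h2 : |y - b| ≤ |b - a| := by
      rw [Set.mem_uIcc] at hy
      rw [abs_le]
      rcases hy with hy | hy <;>
        constructor <;> linarith [le_abs_self (b - a), neg_abs_le (b - a)]
    exact h1.trans (by nlinarith)
  set G : ℝ → ℝ := fun y => F y - f b * y with hG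
  have hG' : ∀ y, HasDerivAt G (f y - f b) y := by
    intro y
    have := (hF y).sub (((hasDerivAt_id y).const_mul (f b)))
    rw [mul_one] at this
    exact this
  have h3 : |G b - G a| ≤ M * |b - a| * |b - a| := by
    simpa [Real.norm_eq_abs] using
      (convex_uIcc a b).norm_image_sub_le_of_norm_hasDerivWithin_le
        (fun z _ => (hG' z).hasDerivWithinAt)
        (fun z hz => by simpa [Real.norm_eq_abs] using hfb z hz)
        left_mem_uIcc right_mem_uIcc
  have h4 : G b - G a = F b - F a - f b * (b - a) := by simp [hG]; ring
  rw [h4] at h3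
  calc |F b - F a - f b * (b - a)| ≤ M * |b - a| * |b - a| := h3
    _ = M * (b - a) ^ 2 := by rw [mul_assoc, ← abs_mul, abs_mul_self]; ring

/-- convergence of the compensator jump sums (right-endpoint version). -/
theorem statement9 (t : ℝ) (ht : 0 < t) (x : ℝ → ℝ) (hx : Cadlag x)
    (hsum : Summable fun s : Ioc (0:ℝ) t => jmp x (s : ℝ) ^ 2)
    (xe : ℝ → ℝ → ℝ) (hcad : ∀ ε : ℝ, 0 < ε → Cadlag (xe ε))
    (happ : ∀ ε : ℝ, 0 < ε → ∀ s : ℝ, 0 ≤ s → |x s - xe ε s| ≤ ε)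
    (K : ℝ) (hjump : ∀ ε : ℝ, 0 < ε → ∀ s : ℝ, 0 < s → |jmp (xe ε) s| ≤ K * |jmp x s|)
    (f f' F : ℝ → ℝ) (hf : ∀ y, HasDerivAt f (f' y) y) (hf' : Continuous f')
    (hF : ∀ y, HasDerivAt F (f y) y) :
    (∀ ε : ℝ, 0 < ε → Summable fun s : Ioc (0:ℝ) t =>
        |F (xe ε (s : ℝ)) - F (Function.leftLim (xe ε) (s : ℝ)) -
          f (xe ε (s : ℝ)) * jmp (xe ε) (s : ℝ)|) ∧
    (Summable fun s : Ioc (0:ℝ) t =>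
        |F (x (s : ℝ)) - F (Function.leftLim x (s : ℝ)) - f (x (s : ℝ)) * jmp x (s : ℝ)|) ∧
    Tendsto (fun ε => ∑' s : Ioc (0:ℝ) t,
        (F (xe ε (s : ℝ)) - F (Function.leftLim (xe ε) (s : ℝ)) -
          f (xe ε (s : ℝ)) * jmp (xe ε) (s : ℝ)))
      (𝓝[>] (0:ℝ))
      (𝓝 (∑' s : Ioc (0:ℝ) t,
        (F (x (s : ℝ)) - F (Function.leftLim x (s : ℝ)) -
          f (x (s : ℝ)) * jmp x (s : ℝ)))) := by
  have hfc : Continuous f :=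
    continuous_iff_continuousAt.2 fun y => (hf y).continuousAt
  have hFc : Continuous F :=
    continuous_iff_continuousAt.2 fun y => (hF y).continuousAt
  obtain ⟨M₀, hM₀0, hM₀⟩ := cadlag_bdd hx ht.le
  -- bounds for f' on compact intervals
  have hBF : ∀ R : ℝ, ∃ Mf : ℝ, ∀ z ∈ Icc (-R) R, |f' z| ≤ Mf := by
    intro R
    obtain ⟨C, hC⟩ :=
      (isCompact_Icc (a := -R) (b := R)).exists_bound_of_continuousOn hf'.continuousOn
    exact ⟨C, fun z hz => by simpa [Real.norm_eq_abs] using hC z hz⟩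
  -- bound on a left limit from a bound on values
  have llb : ∀ (y : ℝ → ℝ) (L B s : ℝ), 0 < s → s ≤ t → Tendsto y (𝓝[<] s) (𝓝 L) →
      (∀ r ∈ Icc (0:ℝ) t, |y r| ≤ B) → |L| ≤ B := by
    intro y L B s hs hst hT hB
    have h1 : Tendsto (fun r => |y r|) (𝓝[<] s) (𝓝 |L|) := (continuous_abs.tendsto L).comp hT
    refine le_of_tendsto h1 ?_
    filter_upwards [Ioo_mem_nhdsLT_of_mem (⟨hs, le_rfl⟩ : s ∈ Ioc 0 s)] with r hr
    exact hB r ⟨hr.1.le, hr.2.le.trans hst⟩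
  have hllx : ∀ s ∈ Ioc (0:ℝ) t, |Function.leftLim x s| ≤ M₀ := fun s hs =>
    llb x _ M₀ s hs.1 hs.2 (hx.2 s hs.1) hM₀
  have hxeb : ∀ ε : ℝ, 0 < ε → ∀ r ∈ Icc (0:ℝ) t, |xe ε r| ≤ M₀ + ε := by
    intro ε hε r hr
    have h1 := happ ε hε r hr.1
    have h2 := hM₀ r hr
    have h3 := abs_sub_abs_le_abs_sub (xe ε r) (x r)
    rw [abs_sub_comm] at h3
    linarith
  have hllxe : ∀ ε : ℝ, 0 < ε → ∀ s ∈ Ioc (0:ℝ) t, |Function.leftLim (xe ε) s| ≤ M₀ + ε :=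
    fun ε hε s hs => llb _ _ _ s hs.1 hs.2 ((hcad ε hε).2 s hs.1) (hxeb ε hε)
  have hllc : ∀ ε : ℝ, 0 < ε → ∀ s ∈ Ioc (0:ℝ) t,
      |Function.leftLim x s - Function.leftLim (xe ε) s| ≤ ε :=
    fun ε hε s hs => llb (fun r => x r - xe ε r) _ ε s hs.1 hs.2
      ((hx.2 s hs.1).sub ((hcad ε hε).2 s hs.1)) (fun r hr => happ ε hε r hr.1)
  -- the key uniform estimate
  have key : ∀ (y : ℝ → ℝ) (R Mf c : ℝ), (∀ z ∈ Icc (-R) R, |f' z| ≤ Mf) →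
      ∀ s ∈ Ioc (0:ℝ) t, |y s| ≤ R → |Function.leftLim y s| ≤ R → |jmp y s| ≤ c * |jmp x s| →
      |F (y s) - F (Function.leftLim y s) - f (y s) * jmp y s| ≤
        (max Mf 0 * c ^ 2) * jmp x s ^ 2 := by
    intro y R Mf c hMf s _ hb ha hj
    have hMf' : ∀ z ∈ Icc (-R) R, |f' z| ≤ max Mf 0 :=
      fun z hz => (hMf z hz).trans (le_max_left _ _)
    have h1 : uIcc (Function.leftLim y s) (y s) ⊆ Icc (-R) R :=
      uIcc_subset_Icc ⟨(abs_le.1 ha).1, (abs_le.1 ha).2⟩ ⟨(abs_le.1 hb).1, (abs_le.1 hb).2⟩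
    have h2 := taylor_est hf hF (M := max Mf 0) (a := Function.leftLim y s) (b := y s)
      (fun z hz => hMf' z (h1 hz))
    have hjy : jmp y s = y s - Function.leftLim y s := rfl
    have h3 : jmp y s ^ 2 ≤ (c * |jmp x s|) ^ 2 := by
      calc jmp y s ^ 2 = |jmp y s| ^ 2 := (sq_abs _).symm
        _ ≤ (c * |jmp x s|) ^ 2 := pow_le_pow_left₀ (abs_nonneg _) hj 2
    calc |F (y s) - F (Function.leftLim y s) - f (y s) * jmp y s|
        ≤ max Mf 0 * jmp y s ^ 2 := by rw [hjy]; exact h2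
      _ ≤ max Mf 0 * (c * |jmp x s|) ^ 2 :=
          mul_le_mul_of_nonneg_left h3 (le_max_right _ _)
      _ = (max Mf 0 * c ^ 2) * jmp x s ^ 2 := by rw [mul_pow, sq_abs]; ring
  -- summability of the dominating sums
  have domsum : ∀ c : ℝ, Summable fun s : Ioc (0:ℝ) t => c * jmp x (s : ℝ) ^ 2 :=
    fun c => hsum.mul_left c
  -- Part 1
  have part1 : ∀ ε : ℝ, 0 < ε → Summable fun s : Ioc (0:ℝ) t =>
      |F (xe ε (s : ℝ)) - F (Function.leftLim (xe ε) (s : ℝ)) -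
        f (xe ε (s : ℝ)) * jmp (xe ε) (s : ℝ)| := by
    intro ε hε
    obtain ⟨Mf, hMf⟩ := hBF (M₀ + ε)
    refine Summable.of_nonneg_of_le (fun s => abs_nonneg _) (fun s => ?_)
      (domsum (max Mf 0 * K ^ 2))
    exact key (xe ε) (M₀ + ε) Mf K hMf s s.2
      (hxeb ε hε s ⟨s.2.1.le, s.2.2⟩) (hllxe ε hε s s.2) (hjump ε hε s s.2.1)
  refine ⟨part1, ?_, ?_⟩
  · -- Part 2
    obtain ⟨Mf, hMf⟩ := hBF M₀
    refine Summable.of_nonneg_of_le (fun s => abs_nonneg _) (fun s => ?_)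
      (domsum (max Mf 0 * 1 ^ 2))
    exact key x M₀ Mf 1 hMf s s.2 (hM₀ s ⟨s.2.1.le, s.2.2⟩) (hllx s s.2)
      (by rw [one_mul])
  · -- Part 3
    obtain ⟨Mf, hMf⟩ := hBF (M₀ + 1)
    refine tendsto_tsum_of_dominated_convergence
      (bound := fun s : Ioc (0:ℝ) t => (max Mf 0 * K ^ 2) * jmp x (s : ℝ) ^ 2)
      (domsum _) (fun s => ?_) ?_
    · -- pointwise convergence
      have hs := s.2
      have hbε : Tendsto (fun ε => xe ε (s : ℝ)) (𝓝[>] (0:ℝ)) (𝓝 (x s)) := by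
        have h0 : Tendsto (fun ε => xe ε (s : ℝ) - x s) (𝓝[>] (0:ℝ)) (𝓝 0) := by
          refine squeeze_zero_norm' ?_ (tendsto_id.mono_left nhdsWithin_le_nhds)
          filter_upwards [self_mem_nhdsWithin] with ε hε
          simpa [Real.norm_eq_abs, abs_sub_comm] using happ ε hε s hs.1.le
        simpa using h0.add_const (x s)
      have haε : Tendsto (fun ε => Function.leftLim (xe ε) (s : ℝ)) (𝓝[>] (0:ℝ))
          (𝓝 (Function.leftLim x s)) := by
        have h0 : Tendsto (fun ε => Function.leftLim (xe ε) (s : ℝ) - Function.leftLim x s)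
            (𝓝[>] (0:ℝ)) (𝓝 0) := by
          refine squeeze_zero_norm' ?_ (tendsto_id.mono_left nhdsWithin_le_nhds)
          filter_upwards [self_mem_nhdsWithin] with ε hε
          simpa [Real.norm_eq_abs, abs_sub_comm] using hllc ε hε s s.2
        simpa using h0.add_const (Function.leftLim x s)
      simp only [jmp]
      exact (((hFc.tendsto _).comp hbε).sub ((hFc.tendsto _).comp haε)).sub
        (((hfc.tendsto _).comp hbε).mul (hbε.sub haε))
    · -- uniform bound for small ε
      filter_upwards [Ioc_mem_nhdsGT_of_mem (⟨le_rfl, one_pos⟩ : (0:ℝ) ∈ Ico 0 1)] with ε hε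
      intro s
      rw [Real.norm_eq_abs]
      refine key (xe ε) (M₀ + 1) Mf K hMf s s.2 ?_ ?_ (hjump ε hε.1 s s.2.1)
      · exact (hxeb ε hε.1 s ⟨s.2.1.le, s.2.2⟩).trans (by linarith [hε.2])
      · exact (hllxe ε hε.1 s s.2).trans (by linarith [hε.2])
end
end

section
/- Let x: [0,∞) → ℝ be càdlàg with Σ_{0<s≤t} (Δx_s)² < ∞ for a fixed t > 0, let (x^ε)_{ε>0} be càdlàg paths with sup_{s≥0} |x_s − x^ε_s| ≤ ε and |Δx^ε_s| ≤ K |Δx_s| for all s > 0 and ε > 0 and some constant K, and let f: ℝ → ℝ be continuously differentiable with antiderivative F. Then each of the sums below converges absolutely and Σ_{0<s≤t} ( F(x^ε_s) − F(x^ε_{s−}) − f(x^ε_{s−}) Δx^ε_s ) → Σ_{0<s≤t} ( F(x_s) − F(x_{s−}) − f(x_{s−}) Δx_s ) as ε → 0+. -/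
open MeasureTheory Filter Topology Set
open scoped Classical

noncomputable section

lemma abs_sub_le_of_uIcc {a b u : ℝ} (hu : u ∈ Set.uIcc a b) : |u - a| ≤ |b - a| := by
  rcases le_total a b with h | h
  · rw [Set.uIcc_of_le h] at hu
    rw [abs_of_nonneg (by linarith [hu.1]), abs_of_nonneg (by linarith)]
    linarith [hu.2]
  · rw [Set.uIcc_of_ge h] at hu
    rw [abs_of_nonpos (by linarith [hu.2]), abs_of_nonpos (by linarith)]
    linarith [hu.1]

lemma taylor_bound {f f' F : ℝ → ℝ} (hf : ∀ y, HasDerivAt f (f' y) y)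
    (hF : ∀ y, HasDerivAt F (f y) y) {R L a b : ℝ}
    (hL : ∀ y ∈ Icc (-R) R, |f' y| ≤ L)
    (ha : a ∈ Icc (-R) R) (hb : b ∈ Icc (-R) R) :
    |F b - F a - f a * (b - a)| ≤ L * (b - a) ^ 2 := by
  have hL0 : 0 ≤ L := le_trans (abs_nonneg _) (hL a ha)
  have hsub : Set.uIcc a b ⊆ Icc (-R) R := Set.uIcc_subset_Icc ha hb
  have hlip : ∀ u ∈ Icc (-R) R, |f u - f a| ≤ L * |u - a| := by
    intro u hu
    have := Convex.norm_image_sub_le_of_norm_hasDerivWithin_le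
      (f := f) (f' := f') (s := Icc (-R) R)
      (fun y _ => (hf y).hasDerivWithinAt) (fun y hy => hL y hy)
      (convex_Icc _ _) ha hu
    simpa [Real.norm_eq_abs] using this
  set g : ℝ → ℝ := fun u => F u - f a * u with hg
  have hg' : ∀ u ∈ Set.uIcc a b, HasDerivWithinAt g (f u - f a) (Set.uIcc a b) u := by
    intro u _
    have : HasDerivAt g (f u - f a) u := by
      have h := (hF u).sub ((hasDerivAt_id u).const_mul (f a))
      simp only [mul_one] at h
      exact h
    exact this.hasDerivWithinAt
  have hgb : ∀ u ∈ Set.uIcc a b, ‖f u - f a‖ ≤ L * |b - a| := by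
    intro u hu
    calc ‖f u - f a‖ = |f u - f a| := rfl
      _ ≤ L * |u - a| := hlip u (hsub hu)
      _ ≤ L * |b - a| := mul_le_mul_of_nonneg_left (abs_sub_le_of_uIcc hu) hL0
  have h1 := Convex.norm_image_sub_le_of_norm_hasDerivWithin_le hg' hgb
    (convex_uIcc a b) Set.left_mem_uIcc Set.right_mem_uIcc
  have h2 : |g b - g a| ≤ L * |b - a| * |b - a| := by simpa [Real.norm_eq_abs] using h1
  have h3 : g b - g a = F b - F a - f a * (b - a) := by simp only [hg]; ring
  rw [h3] at h2
  calc |F b - F a - f a * (b - a)| ≤ L * |b - a| * |b - a| := h2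
    _ = L * (b - a) ^ 2 := by rw [mul_assoc, ← abs_mul, ← sq, abs_sq]

lemma cadlag_bound {x : ℝ → ℝ} (hx : Cadlag x) (t : ℝ) :
    ∃ M : ℝ, 0 ≤ M ∧ (∀ s ∈ Set.Icc (0:ℝ) t, |x s| ≤ M) ∧
      ∀ s ∈ Set.Ioc (0:ℝ) t, |Function.leftLim x s| ≤ M := by
  set C : ℝ → ℝ := fun s => |x s| + |Function.leftLim x s| + 1 with hC
  set U : ℝ → Set ℝ := fun s => {r | 0 ≤ r → |x r| ≤ C s} with hU
  have hUnhds : ∀ s ∈ Set.Icc (0:ℝ) t, U s ∈ 𝓝 s := by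
    intro s hs
    have hright : ∀ᶠ r in 𝓝[≥] s, (0 ≤ r → |x r| ≤ C s) := by
      have h1 : ∀ᶠ r in 𝓝[≥] s, dist (x r) (x s) < 1 :=
        (hx.1 s hs.1) (Metric.ball_mem_nhds _ one_pos)
      filter_upwards [h1] with r hr _
      rw [Real.dist_eq] at hr
      have h0 : 0 ≤ |Function.leftLim x s| := abs_nonneg _
      have := abs_sub_abs_le_abs_sub (x r) (x s)
      simp only [hC]; linarith
    have hleft : ∀ᶠ r in 𝓝[<] s, (0 ≤ r → |x r| ≤ C s) := by
      rcases eq_or_lt_of_le hs.1 with h0 | h0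
      · filter_upwards [self_mem_nhdsWithin] with r hr hr0
        exact absurd (lt_of_lt_of_le hr (le_of_eq h0.symm)) (not_lt.2 hr0)
      · have h1 : ∀ᶠ r in 𝓝[<] s, dist (x r) (Function.leftLim x s) < 1 :=
          (hx.2 s h0) (Metric.ball_mem_nhds _ one_pos)
        filter_upwards [h1] with r hr _
        rw [Real.dist_eq] at hr
        have h0' : 0 ≤ |x s| := abs_nonneg _
        have := abs_sub_abs_le_abs_sub (x r) (Function.leftLim x s)
        simp only [hC]; linarith
    have : ∀ᶠ r in 𝓝 s, (0 ≤ r → |x r| ≤ C s) := by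
      rw [← nhdsLT_sup_nhdsGE s, eventually_sup]
      exact ⟨hleft, hright⟩
    exact this
  obtain ⟨T, hTsub, hTcov⟩ := (isCompact_Icc (a := (0:ℝ)) (b := t)).elim_nhds_subcover U hUnhds
  obtain ⟨M1, hM1⟩ : ∃ M1 : ℝ, ∀ s ∈ T, C s ≤ M1 := by
    obtain ⟨M1, hM1⟩ := (T.image C).bddAbove
    exact ⟨M1, fun s hs => hM1 (Finset.mem_image_of_mem C hs)⟩
  have hMx : ∀ s ∈ Set.Icc (0:ℝ) t, |x s| ≤ max M1 0 := by
    intro s hs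
    obtain ⟨u, huT, hsu⟩ := Set.mem_iUnion₂.1 (hTcov hs)
    exact le_trans (hsu hs.1) (le_trans (hM1 u huT) (le_max_left _ _))
  refine ⟨max M1 0, le_max_right _ _, hMx, ?_⟩
  intro s hs
  have h0t : (0:ℝ) < s := hs.1
  refine le_of_tendsto ((continuous_abs.tendsto _).comp (hx.2 s hs.1)) ?_
  filter_upwards [Ioo_mem_nhdsLT_of_mem (Set.mem_Ioc.2 ⟨hs.1, le_refl s⟩)] with r hr
  exact hMx r ⟨hr.1.le, hr.2.le.trans hs.2⟩

lemma leftLim_diff_le {x y : ℝ → ℝ} (hx : Cadlag x) (hy : Cadlag y) {s ε : ℝ} (hs : 0 < s)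
    (h : ∀ r : ℝ, 0 ≤ r → |x r - y r| ≤ ε) :
    |Function.leftLim x s - Function.leftLim y s| ≤ ε := by
  have h1 : Tendsto (fun r => |x r - y r|) (𝓝[<] s)
      (𝓝 |Function.leftLim x s - Function.leftLim y s|) :=
    ((hx.2 s hs).sub (hy.2 s hs)).abs
  refine le_of_tendsto h1 ?_
  filter_upwards [Ioo_mem_nhdsLT_of_mem (Set.mem_Ioc.2 ⟨hs, le_refl s⟩)] with r hr
  exact h r hr.1.le

lemma summable_taylor {x y : ℝ → ℝ} (hy : Cadlag y) {t : ℝ}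
    (hsum : Summable fun s : Ioc (0:ℝ) t => jmp x (s:ℝ) ^ 2)
    {c : ℝ} (hc : ∀ s : ℝ, 0 < s → |jmp y s| ≤ c * |jmp x s|)
    {f f' F : ℝ → ℝ} (hf : ∀ z, HasDerivAt f (f' z) z) (hf' : Continuous f')
    (hF : ∀ z, HasDerivAt F (f z) z) :
    Summable fun s : Ioc (0:ℝ) t =>
      |F (y (s:ℝ)) - F (Function.leftLim y (s:ℝ)) -
        f (Function.leftLim y (s:ℝ)) * jmp y (s:ℝ)| := by
  obtain ⟨M, hM0, hMy, hMl⟩ := cadlag_bound hy t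
  obtain ⟨L, hL⟩ := (isCompact_Icc (a := -M) (b := M)).exists_bound_of_continuousOn
    hf'.continuousOn
  have hL' : ∀ z ∈ Icc (-M) M, |f' z| ≤ L := by
    intro z hz; simpa [Real.norm_eq_abs] using hL z hz
  have hL0 : 0 ≤ L := le_trans (abs_nonneg _) (hL' 0 ⟨by linarith, hM0⟩)
  refine Summable.of_nonneg_of_le (fun s => abs_nonneg _) (fun s => ?_)
    ((hsum.mul_left (c ^ 2)).mul_left L)
  have hb : y (s:ℝ) ∈ Icc (-M) M := abs_le.1 (hMy (s:ℝ) ⟨s.2.1.le, s.2.2⟩)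
  have ha : Function.leftLim y (s:ℝ) ∈ Icc (-M) M := abs_le.1 (hMl (s:ℝ) s.2)
  have h1 := taylor_bound hf hF hL' ha hb
  have hjy : (jmp y (s:ℝ)) ^ 2 ≤ c ^ 2 * jmp x (s:ℝ) ^ 2 := by
    have h2 : |jmp y (s:ℝ)| ^ 2 ≤ (c * |jmp x (s:ℝ)|) ^ 2 :=
      pow_le_pow_left₀ (abs_nonneg _) (hc (s:ℝ) s.2.1) 2
    calc (jmp y (s:ℝ)) ^ 2 = |jmp y (s:ℝ)| ^ 2 := (sq_abs _).symm
      _ ≤ (c * |jmp x (s:ℝ)|) ^ 2 := h2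
      _ = c ^ 2 * jmp x (s:ℝ) ^ 2 := by rw [mul_pow, sq_abs]
  calc |F (y (s:ℝ)) - F (Function.leftLim y (s:ℝ)) -
        f (Function.leftLim y (s:ℝ)) * jmp y (s:ℝ)|
      ≤ L * (jmp y (s:ℝ)) ^ 2 := by
        simpa [jmp] using h1
    _ ≤ L * (c ^ 2 * jmp x (s:ℝ) ^ 2) := mul_le_mul_of_nonneg_left hjy hL0

/-- convergence of the compensator jump sums (left-endpoint version). -/
theorem statement10 (t : ℝ) (ht : 0 < t) (x : ℝ → ℝ) (hx : Cadlag x)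
    (hsum : Summable fun s : Ioc (0:ℝ) t => jmp x (s : ℝ) ^ 2)
    (xe : ℝ → ℝ → ℝ) (hcad : ∀ ε : ℝ, 0 < ε → Cadlag (xe ε))
    (happ : ∀ ε : ℝ, 0 < ε → ∀ s : ℝ, 0 ≤ s → |x s - xe ε s| ≤ ε)
    (K : ℝ) (hjump : ∀ ε : ℝ, 0 < ε → ∀ s : ℝ, 0 < s → |jmp (xe ε) s| ≤ K * |jmp x s|)
    (f f' F : ℝ → ℝ) (hf : ∀ y, HasDerivAt f (f' y) y) (hf' : Continuous f')
    (hF : ∀ y, HasDerivAt F (f y) y) :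
    (∀ ε : ℝ, 0 < ε → Summable fun s : Ioc (0:ℝ) t =>
        |F (xe ε (s : ℝ)) - F (Function.leftLim (xe ε) (s : ℝ)) -
          f (Function.leftLim (xe ε) (s : ℝ)) * jmp (xe ε) (s : ℝ)|) ∧
    (Summable fun s : Ioc (0:ℝ) t =>
        |F (x (s : ℝ)) - F (Function.leftLim x (s : ℝ)) -
          f (Function.leftLim x (s : ℝ)) * jmp x (s : ℝ)|) ∧
    Tendsto (fun ε => ∑' s : Ioc (0:ℝ) t,
        (F (xe ε (s : ℝ)) - F (Function.leftLim (xe ε) (s : ℝ)) -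
          f (Function.leftLim (xe ε) (s : ℝ)) * jmp (xe ε) (s : ℝ)))
      (𝓝[>] (0:ℝ))
      (𝓝 (∑' s : Ioc (0:ℝ) t,
        (F (x (s : ℝ)) - F (Function.leftLim x (s : ℝ)) -
          f (Function.leftLim x (s : ℝ)) * jmp x (s : ℝ)))) := by
  have hfc : Continuous f := by
    rw [continuous_iff_continuousAt]; exact fun y => (hf y).continuousAt
  have hFc : Continuous F := by
    rw [continuous_iff_continuousAt]; exact fun y => (hF y).continuousAt
  refine ⟨fun ε hε => summable_taylor (hcad ε hε) hsum (hjump ε hε) hf hf' hF,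
    summable_taylor (c := 1) hx hsum (fun s _ => by simp) hf hf' hF, ?_⟩
  obtain ⟨M, hM0, hMx, hMl⟩ := cadlag_bound hx t
  obtain ⟨L, hL⟩ := (isCompact_Icc (a := -(M+1)) (b := M+1)).exists_bound_of_continuousOn
    hf'.continuousOn
  have hL' : ∀ z ∈ Icc (-(M+1)) (M+1), |f' z| ≤ L := by
    intro z hz; simpa [Real.norm_eq_abs] using hL z hz
  have hL0 : 0 ≤ L := le_trans (abs_nonneg _) (hL' 0 ⟨by linarith, by linarith⟩)
  refine tendsto_tsum_of_dominated_convergence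
    (bound := fun s : Ioc (0:ℝ) t => L * (K ^ 2 * jmp x (s:ℝ) ^ 2))
    ((hsum.mul_left (K ^ 2)).mul_left L) (fun s => ?_) ?_
  · -- pointwise convergence
    have hbs : Tendsto (fun ε => xe ε (s:ℝ)) (𝓝[>] (0:ℝ)) (𝓝 (x (s:ℝ))) := by
      rw [tendsto_iff_dist_tendsto_zero]
      refine squeeze_zero' (Eventually.of_forall fun _ => dist_nonneg) ?_
        (tendsto_id.mono_left nhdsWithin_le_nhds)
      filter_upwards [self_mem_nhdsWithin] with ε hε
      rw [Real.dist_eq, abs_sub_comm]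
      exact happ ε hε (s:ℝ) s.2.1.le
    have hls : Tendsto (fun ε => Function.leftLim (xe ε) (s:ℝ)) (𝓝[>] (0:ℝ))
        (𝓝 (Function.leftLim x (s:ℝ))) := by
      rw [tendsto_iff_dist_tendsto_zero]
      refine squeeze_zero' (Eventually.of_forall fun _ => dist_nonneg) ?_
        (tendsto_id.mono_left nhdsWithin_le_nhds)
      filter_upwards [self_mem_nhdsWithin] with ε hε
      rw [Real.dist_eq, abs_sub_comm]
      exact leftLim_diff_le hx (hcad ε hε) s.2.1 (fun r hr => happ ε hε r hr)
    have hGc : Continuous fun p : ℝ × ℝ => F p.1 - F p.2 - f p.2 * (p.1 - p.2) := by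
      fun_prop
    have := (hGc.tendsto (x (s:ℝ), Function.leftLim x (s:ℝ))).comp (hbs.prodMk_nhds hls)
    simpa [jmp, Function.comp_def] using this
  · -- eventual bound
    filter_upwards [Ioc_mem_nhdsGT_of_mem (Set.mem_Ico.2 ⟨le_refl (0:ℝ), one_pos⟩)] with ε hε
    intro s
    have hε0 : (0:ℝ) < ε := hε.1
    have hxs : |x (s:ℝ)| ≤ M := hMx (s:ℝ) ⟨s.2.1.le, s.2.2⟩
    have hxl : |Function.leftLim x (s:ℝ)| ≤ M := hMl (s:ℝ) s.2
    have h1 : |xe ε (s:ℝ)| ≤ M + 1 := by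
      have := happ ε hε0 (s:ℝ) s.2.1.le
      have h2 := abs_sub_abs_le_abs_sub (x (s:ℝ)) (xe ε (s:ℝ))
      have := abs_abs_sub_abs_le_abs_sub (x (s:ℝ)) (xe ε (s:ℝ))
      have h3 := abs_le.1 this
      linarith [hε.2]
    have h2 : |Function.leftLim (xe ε) (s:ℝ)| ≤ M + 1 := by
      have hd := leftLim_diff_le hx (hcad ε hε0) s.2.1 (fun r hr => happ ε hε0 r hr)
      have h3 := abs_le.1 (abs_abs_sub_abs_le_abs_sub (Function.leftLim x (s:ℝ))
        (Function.leftLim (xe ε) (s:ℝ)))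
      linarith [hε.2]
    have htay := taylor_bound hf hF hL' (abs_le.1 h2) (abs_le.1 h1)
    have hjy : (jmp (xe ε) (s:ℝ)) ^ 2 ≤ K ^ 2 * jmp x (s:ℝ) ^ 2 := by
      have hsq : |jmp (xe ε) (s:ℝ)| ^ 2 ≤ (K * |jmp x (s:ℝ)|) ^ 2 :=
        pow_le_pow_left₀ (abs_nonneg _) (hjump ε hε0 (s:ℝ) s.2.1) 2
      calc (jmp (xe ε) (s:ℝ)) ^ 2 = |jmp (xe ε) (s:ℝ)| ^ 2 := (sq_abs _).symm
        _ ≤ (K * |jmp x (s:ℝ)|) ^ 2 := hsq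
        _ = K ^ 2 * jmp x (s:ℝ) ^ 2 := by rw [mul_pow, sq_abs]
    calc ‖F (xe ε (s:ℝ)) - F (Function.leftLim (xe ε) (s:ℝ)) -
          f (Function.leftLim (xe ε) (s:ℝ)) * jmp (xe ε) (s:ℝ)‖
        ≤ L * (jmp (xe ε) (s:ℝ)) ^ 2 := by
          simpa [jmp, Real.norm_eq_abs] using htay
      _ ≤ L * (K ^ 2 * jmp x (s:ℝ) ^ 2) := mul_le_mul_of_nonneg_left hjy hL0
end
end

section
/- Fix T > 0. Let x: [0,∞) → ℝ be càdlàg, and for ε > 0 let x^ε be a càdlàg path with |x_s − x^ε_s| ≤ ε for every s ≥ 0 and |Δx^ε_s| ≤ |Δx_s| for every s > 0. Then sup_{0≤t≤T} Σ_{0<s≤t} | (Δx_s − Δx^ε_s) Δx^ε_s | ≤ Σ_{0<s≤T} min { 2ε |Δx_s|, 2 |Δx_s|² }; in particular, if Σ_{0<s≤T} (Δx_s)² < ∞, then this bound tends to 0 as ε → 0+. -/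
open MeasureTheory Filter Topology Set
open scoped Classical

noncomputable section

lemma aux_tendsto {ι : Type*} (a : ι → ℝ) (hsum : Summable fun s => a s ^ 2) :
    Tendsto (fun ε => ∑' s : ι, ENNReal.ofReal (min (2 * ε * |a s|) (2 * |a s| ^ 2)))
      (𝓝[>] (0:ℝ)) (𝓝 (0 : ENNReal)) := by
  rw [ENNReal.tendsto_nhds_zero]
  intro η hη
  rcases eq_or_ne η ⊤ with rfl | hηtop
  · exact Filter.Eventually.of_forall fun _ => le_top
  have hsum2 : Summable fun s : ι => 2 * |a s| ^ 2 := by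
    have : Summable fun s : ι => |a s| ^ 2 := by simpa [sq_abs] using hsum
    exact this.mul_left 2
  have hg : ∑' s : ι, ENNReal.ofReal (2 * |a s| ^ 2) ≠ ⊤ := by
    rw [← ENNReal.ofReal_tsum_of_nonneg (fun s => by positivity) hsum2]
    exact ENNReal.ofReal_ne_top
  have hhalf_pos : (0 : ENNReal) < η / 2 := ENNReal.half_pos hη.ne'
  have hhalf_ne : η / 2 ≠ ⊤ := by simp [ENNReal.div_eq_top, hηtop]
  obtain ⟨F, hF⟩ : ∃ F : Finset ι,
      ∑' s : {s : ι // s ∉ F}, ENNReal.ofReal (2 * |a (s : ι)| ^ 2) < η / 2 :=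
    ((ENNReal.tendsto_tsum_compl_atTop_zero hg).eventually (gt_mem_nhds hhalf_pos)).exists
  set M : ℝ := ∑ s ∈ F, |a s| with hM
  have hM0 : 0 ≤ M := Finset.sum_nonneg fun s _ => abs_nonneg _
  have htr : 0 < (η / 2).toReal := ENNReal.toReal_pos hhalf_pos.ne' hhalf_ne
  set δ : ℝ := (η / 2).toReal / (2 * (M + 1)) with hδ
  have hδ0 : 0 < δ := by positivity
  filter_upwards [Ioo_mem_nhdsGT_of_mem (Set.mem_Ico.mpr ⟨le_refl (0:ℝ), hδ0⟩)] with ε' hε'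
  have hε'0 : 0 < ε' := hε'.1
  have hsplit :
      (∑' s : ↑((F : Set ι)), ENNReal.ofReal (min (2 * ε' * |a (s : ι)|) (2 * |a (s : ι)| ^ 2))) +
        ∑' s : ↑((F : Set ι)ᶜ),
          ENNReal.ofReal (min (2 * ε' * |a (s : ι)|) (2 * |a (s : ι)| ^ 2)) =
        ∑' s : ι, ENNReal.ofReal (min (2 * ε' * |a s|) (2 * |a s| ^ 2)) :=
    Summable.tsum_add_tsum_compl (s := (F : Set ι))
      (f := fun s => ENNReal.ofReal (min (2 * ε' * |a s|) (2 * |a s| ^ 2)))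
      ENNReal.summable ENNReal.summable
  rw [← hsplit]
  have htail : ∑' s : ↑((F : Set ι)ᶜ),
      ENNReal.ofReal (min (2 * ε' * |a (s : ι)|) (2 * |a (s : ι)| ^ 2)) ≤ η / 2 := by
    refine le_trans (ENNReal.tsum_le_tsum fun s =>
      ENNReal.ofReal_le_ofReal (min_le_right _ _)) ?_
    exact le_of_lt hF
  have hfin : ∑' s : ↑((F : Set ι)),
      ENNReal.ofReal (min (2 * ε' * |a (s : ι)|) (2 * |a (s : ι)| ^ 2)) ≤ η / 2 := by
    rw [Finset.tsum_subtype' F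
      (fun s => ENNReal.ofReal (min (2 * ε' * |a s|) (2 * |a s| ^ 2)))]
    calc ∑ s ∈ F, ENNReal.ofReal (min (2 * ε' * |a s|) (2 * |a s| ^ 2))
        ≤ ∑ s ∈ F, ENNReal.ofReal (2 * ε' * |a s|) :=
          Finset.sum_le_sum fun s _ => ENNReal.ofReal_le_ofReal (min_le_left _ _)
      _ = ENNReal.ofReal (∑ s ∈ F, 2 * ε' * |a s|) :=
          (ENNReal.ofReal_sum_of_nonneg fun s _ => by positivity).symm
      _ = ENNReal.ofReal (2 * ε' * M) := by rw [← Finset.mul_sum]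
      _ ≤ ENNReal.ofReal ((η / 2).toReal) := by
          refine ENNReal.ofReal_le_ofReal ?_
          have h1 : 2 * ε' * M ≤ 2 * δ * (M + 1) := by nlinarith [hε'.2.le]
          have h2 : 2 * δ * (M + 1) = (η / 2).toReal := by
            rw [hδ]; field_simp
          linarith
      _ = η / 2 := ENNReal.ofReal_toReal hhalf_ne
  calc _ ≤ η / 2 + η / 2 := add_le_add hfin htail
    _ = η := ENNReal.add_halves η

/-- `sup_{0≤t≤T} Σ_{0<s≤t} |(Δx_s - Δxᵉ_s) Δxᵉ_s| ≤ Σ_{0<s≤T} min(2ε|Δx_s|, 2|Δx_s|²)`,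
and if `Σ_{0<s≤T} (Δx_s)² < ∞` then the bound tends to `0` as `ε → 0+`. -/
theorem statement13 (T : ℝ) (hT : 0 < T) (x : ℝ → ℝ) (hx : Cadlag x)
    (xe : ℝ → ℝ → ℝ) (hcad : ∀ ε : ℝ, 0 < ε → Cadlag (xe ε))
    (happ : ∀ ε : ℝ, 0 < ε → ∀ s : ℝ, 0 ≤ s → |x s - xe ε s| ≤ ε)
    (hjump : ∀ ε : ℝ, 0 < ε → ∀ s : ℝ, 0 < s → |jmp (xe ε) s| ≤ |jmp x s|) :
    (∀ ε : ℝ, 0 < ε →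
      (⨆ t : Icc (0:ℝ) T, ∑' s : Ioc (0:ℝ) (t : ℝ),
          ENNReal.ofReal |(jmp x (s : ℝ) - jmp (xe ε) (s : ℝ)) * jmp (xe ε) (s : ℝ)|) ≤
        ∑' s : Ioc (0:ℝ) T,
          ENNReal.ofReal (min (2 * ε * |jmp x (s : ℝ)|) (2 * |jmp x (s : ℝ)| ^ 2))) ∧
    ((Summable fun s : Ioc (0:ℝ) T => jmp x (s : ℝ) ^ 2) →
      Tendsto (fun ε => ∑' s : Ioc (0:ℝ) T,
          ENNReal.ofReal (min (2 * ε * |jmp x (s : ℝ)|) (2 * |jmp x (s : ℝ)| ^ 2)))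
        (𝓝[>] (0:ℝ)) (𝓝 (0 : ENNReal))) := by
  constructor
  · intro ε hε
    have key : ∀ s : ℝ, 0 < s →
        |(jmp x s - jmp (xe ε) s) * jmp (xe ε) s| ≤
          min (2 * ε * |jmp x s|) (2 * |jmp x s| ^ 2) := by
      intro s hs
      have hj : |jmp x s - jmp (xe ε) s| ≤ 2 * ε := by
        have hxl : Tendsto x (𝓝[<] s) (𝓝 (Function.leftLim x s)) := hx.2 s hs
        have hxel : Tendsto (xe ε) (𝓝[<] s) (𝓝 (Function.leftLim (xe ε) s)) :=
          (hcad ε hε).2 s hs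
        have hll : |Function.leftLim x s - Function.leftLim (xe ε) s| ≤ ε := by
          have htend : Tendsto (fun r => |x r - xe ε r|) (𝓝[<] s)
              (𝓝 |Function.leftLim x s - Function.leftLim (xe ε) s|) :=
            (hxl.sub hxel).abs
          refine le_of_tendsto htend ?_
          filter_upwards [Ioo_mem_nhdsLT_of_mem (Set.mem_Ioc.mpr ⟨hs, le_refl s⟩)] with r hr
          exact happ ε hε r hr.1.le
        have h1 : |x s - xe ε s| ≤ ε := happ ε hε s hs.le
        calc |jmp x s - jmp (xe ε) s|
            = |(x s - xe ε s) - (Function.leftLim x s - Function.leftLim (xe ε) s)| := by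
              congr 1; unfold jmp; ring
          _ ≤ |x s - xe ε s| + |Function.leftLim x s - Function.leftLim (xe ε) s| :=
              abs_sub _ _
          _ ≤ ε + ε := add_le_add h1 hll
          _ = 2 * ε := by ring
      have hje : |jmp (xe ε) s| ≤ |jmp x s| := hjump ε hε s hs
      rw [abs_mul]
      refine le_min ?_ ?_
      · calc |jmp x s - jmp (xe ε) s| * |jmp (xe ε) s| ≤ (2 * ε) * |jmp x s| :=
            mul_le_mul hj hje (abs_nonneg _) (by positivity)
          _ = 2 * ε * |jmp x s| := by ring
      · have h2 : |jmp x s - jmp (xe ε) s| ≤ 2 * |jmp x s| := by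
          have := abs_sub (jmp x s) (jmp (xe ε) s)
          linarith
        calc |jmp x s - jmp (xe ε) s| * |jmp (xe ε) s| ≤ (2 * |jmp x s|) * |jmp x s| :=
            mul_le_mul h2 hje (abs_nonneg _) (by positivity)
          _ = 2 * |jmp x s| ^ 2 := by ring
    refine iSup_le fun t => ?_
    rw [tsum_subtype (Ioc (0:ℝ) (t:ℝ))
        (fun s => ENNReal.ofReal |(jmp x s - jmp (xe ε) s) * jmp (xe ε) s|),
      tsum_subtype (Ioc (0:ℝ) T)
        (fun s => ENNReal.ofReal (min (2 * ε * |jmp x s|) (2 * |jmp x s| ^ 2)))]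
    refine ENNReal.tsum_le_tsum fun s => ?_
    by_cases hst : s ∈ Ioc (0:ℝ) (t:ℝ)
    · rw [Set.indicator_of_mem hst, Set.indicator_of_mem (Ioc_subset_Ioc_right t.2.2 hst)]
      exact ENNReal.ofReal_le_ofReal (key s hst.1)
    · simp [Set.indicator_of_notMem hst]
  · intro hsum
    exact aux_tendsto (fun s : Ioc (0:ℝ) T => jmp x (s : ℝ)) hsum
end
end

section
/- Let x: [0,∞) → ℝ be càdlàg, t ≥ 0, and 0 < ε < 1. Then ( ⌊1/ε⌋ / (⌊1/ε⌋ + 1) ) · (1/⌊1/ε⌋) · TTV(x,[0,t],1/⌊1/ε⌋) ≤ ε · TTV(x,[0,t],ε) ≤ ( ⌈1/ε⌉ / (⌈1/ε⌉ − 1) ) · (1/⌈1/ε⌉) · TTV(x,[0,t],1/⌈1/ε⌉), where ⌊·⌋ and ⌈·⌉ denote the floor and ceiling functions. -/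
open MeasureTheory Filter Topology Set
open scoped Classical

noncomputable section

/-- Oscillation control for càdlàg paths: there is a finite set `D` of division points such
that any increment over an interval `(u,v] ⊆ [0,t]` avoiding `D` is smaller than `δ`. -/
lemma cadlag_osc (x : ℝ → ℝ) (hx : Cadlag x) (t : ℝ) (ht : 0 ≤ t) (δ : ℝ) (hδ : 0 < δ) :
    ∃ D : Finset ℝ, ∀ u v : ℝ, 0 ≤ u → u < v → v ≤ t →
      (∀ d ∈ D, d ∉ Set.Ioc u v) → |x v - x u| < δ := by
  set P : ℝ → Prop := fun a => ∃ D : Finset ℝ, ∀ u v : ℝ, 0 ≤ u → u < v → v ≤ a →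
      (∀ d ∈ D, d ∉ Set.Ioc u v) → |x v - x u| < δ with hPdef
  have hP0 : P 0 := ⟨∅, fun u v hu huv hv _ =>
    absurd ((hu.trans_lt huv).trans_le hv) (lt_irrefl 0)⟩
  have hPmono : ∀ a b : ℝ, b ≤ a → P a → P b := by
    rintro a b hba ⟨D, hD⟩
    exact ⟨D, fun u v hu huv hv h => hD u v hu huv (hv.trans hba) h⟩
  set A : Set ℝ := {a | a ∈ Set.Icc 0 t ∧ P a} with hAdef
  have hA0 : (0:ℝ) ∈ A := ⟨⟨le_refl 0, ht⟩, hP0⟩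
  have hAne : A.Nonempty := ⟨0, hA0⟩
  have hAbdd : BddAbove A := ⟨t, fun a ha => ha.1.2⟩
  set c := sSup A with hcdef
  have hc0 : 0 ≤ c := le_csSup hAbdd hA0
  have hct : c ≤ t := csSup_le hAne fun a ha => ha.1.2
  have hPc : P c := by
    rcases eq_or_lt_of_le hc0 with h0 | h0
    · exact hPmono 0 c h0.ge hP0
    · have hL := hx.2 c h0
      have hmem : Set.Ioo (Function.leftLim x c - δ/4) (Function.leftLim x c + δ/4) ∈
          𝓝 (Function.leftLim x c) := Ioo_mem_nhds (by linarith) (by linarith)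
      have hev : {r : ℝ | |x r - Function.leftLim x c| < δ/4} ∈ 𝓝[<] c := by
        filter_upwards [hL hmem] with r hr
        rw [Set.mem_preimage, Set.mem_Ioo] at hr
        rw [abs_sub_lt_iff]
        constructor <;> linarith
      obtain ⟨l, hl, hIoo⟩ := mem_nhdsLT_iff_exists_Ioo_subset.mp hev
      rw [Set.mem_Iio] at hl
      obtain ⟨a, haA, hla⟩ := exists_lt_of_lt_csSup hAne hl
      have hac : a ≤ c := le_csSup hAbdd haA
      rcases eq_or_lt_of_le hac with heq | hac'
      · exact heq ▸ haA.2
      obtain ⟨D, hD⟩ := haA.2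
      refine ⟨insert a (insert c D), fun u v hu huv hv h => ?_⟩
      have hcv : v < c := by
        rcases eq_or_lt_of_le hv with heq | h'
        · exact absurd ⟨heq ▸ huv, heq.ge⟩ (h c (by simp))
        · exact h'
      have ha' : a ∉ Set.Ioc u v := h a (by simp)
      simp only [Set.mem_Ioc, not_and_or, not_lt, not_le] at ha'
      rcases ha' with hau | hva
      · have hu' : u ∈ Set.Ioo l c := ⟨hla.trans_le hau, huv.trans hcv⟩
        have hv' : v ∈ Set.Ioo l c := ⟨hla.trans_le (hau.trans huv.le), hcv⟩
        have h1 := hIoo hu'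
        have h2 := hIoo hv'
        rw [Set.mem_setOf_eq, abs_sub_lt_iff] at h1 h2
        rw [abs_sub_lt_iff]
        constructor <;> linarith
      · exact hD u v hu huv hva.le fun d hd => h d (by simp [hd])
  have hceq : c = t := by
    by_contra hne
    have hct' : c < t := lt_of_le_of_ne hct hne
    have hR := hx.1 c hc0
    have hmem : Set.Ioo (x c - δ/4) (x c + δ/4) ∈ 𝓝 (x c) :=
      Ioo_mem_nhds (by linarith) (by linarith)
    have hev : {r : ℝ | |x r - x c| < δ/4} ∈ 𝓝[≥] c := by
      filter_upwards [hR hmem] with r hr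
      rw [Set.mem_preimage, Set.mem_Ioo] at hr
      rw [abs_sub_lt_iff]
      constructor <;> linarith
    obtain ⟨r, hr, hIco⟩ := mem_nhdsGE_iff_exists_Ico_subset.mp hev
    rw [Set.mem_Ioi] at hr
    obtain ⟨D, hD⟩ := hPc
    have hcb : c < min t ((c + r)/2) := lt_min hct' (by linarith)
    have hbr : min t ((c + r)/2) < r := (min_le_right _ _).trans_lt (by linarith)
    have hbt : min t ((c + r)/2) ≤ t := min_le_left _ _
    have hbA : min t ((c + r)/2) ∈ A := by
      refine ⟨⟨hc0.trans hcb.le, hbt⟩, insert c D, fun u v hu huv hv h => ?_⟩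
      have hc' : c ∉ Set.Ioc u v := h c (by simp)
      simp only [Set.mem_Ioc, not_and_or, not_lt, not_le] at hc'
      rcases hc' with hcu | hvc
      · have h1 := hIco ⟨hcu, (huv.trans_le hv).trans hbr⟩
        have h2 := hIco ⟨hcu.trans huv.le, hv.trans_lt hbr⟩
        rw [Set.mem_setOf_eq, abs_sub_lt_iff] at h1 h2
        rw [abs_sub_lt_iff]
        constructor <;> linarith
      · exact hD u v hu huv hvc.le fun d hd => h d (by simp [hd])
    exact absurd (le_csSup hAbdd hbA) (not_le.mpr hcb)
  exact hceq ▸ hPc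

/-- The set of partition sums defining `TTV x 0 t δ` is bounded above when `x` is càdlàg
and `δ > 0`. -/
lemma ttv_bddAbove (x : ℝ → ℝ) (hx : Cadlag x) (t : ℝ) (ht : 0 ≤ t) (δ : ℝ) (hδ : 0 < δ) :
    BddAbove {v : ℝ | ∃ (n : ℕ) (tt : ℕ → ℝ), 0 ≤ tt 0 ∧ tt n ≤ t ∧
      (∀ i, i < n → tt i < tt (i + 1)) ∧
      v = ∑ i ∈ Finset.range n, max (|x (tt (i + 1)) - x (tt i)| - δ) 0} := by
  obtain ⟨D, hD⟩ := cadlag_osc x hx t ht δ hδ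
  have hD'ne : (insert (0:ℝ) D).Nonempty := ⟨0, Finset.mem_insert_self _ _⟩
  set M := (insert (0:ℝ) D).sup' hD'ne (fun d => |x d|) + δ with hM
  have hMbound : ∀ s : ℝ, 0 ≤ s → s ≤ t → |x s| ≤ M := by
    intro s hs hst
    have hEne : ((insert (0:ℝ) D).filter (fun d => d ≤ s)).Nonempty :=
      ⟨0, Finset.mem_filter.mpr ⟨Finset.mem_insert_self _ _, hs⟩⟩
    obtain ⟨d, hdE, hdmax⟩ := Finset.exists_max_image _ id hEne
    rw [Finset.mem_filter] at hdE
    have hxd : |x d| ≤ (insert (0:ℝ) D).sup' hD'ne (fun e => |x e|) :=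
      Finset.le_sup' (fun e => |x e|) hdE.1
    have hd0 : 0 ≤ d := hdmax 0 (Finset.mem_filter.mpr ⟨Finset.mem_insert_self _ _, hs⟩)
    rcases eq_or_lt_of_le hdE.2 with heq | hlt
    · rw [hM, ← heq]; linarith
    · have hfree : ∀ e ∈ D, e ∉ Set.Ioc d s := by
        intro e heD hecon
        have := hdmax e (Finset.mem_filter.mpr ⟨Finset.mem_insert_of_mem heD, hecon.2⟩)
        exact absurd hecon.1 (not_lt.mpr this)
      have h1 := hD d s hd0 hlt hst hfree
      have h2 := abs_sub_abs_le_abs_sub (x s) (x d)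
      rw [hM]; linarith
  have hM0 : 0 ≤ M := by
    have h1 : (0:ℝ) ≤ |x 0| := abs_nonneg _
    have h2 : |x 0| ≤ (insert (0:ℝ) D).sup' hD'ne (fun e => |x e|) :=
      Finset.le_sup' (fun e => |x e|) (Finset.mem_insert_self 0 D)
    rw [hM]; linarith
  refine ⟨2 * M * D.card, ?_⟩
  rintro v ⟨n, tt, h0, hn, hmono, rfl⟩
  have hmono' : ∀ j, j ≤ n → ∀ i, i ≤ j → tt i ≤ tt j := by
    intro j
    induction j with
    | zero => intro _ i hi; rw [Nat.le_zero.mp hi]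
    | succ k ih =>
      intro hk i hi
      rcases Nat.lt_or_ge i (k+1) with h | h
      · exact (ih (Nat.le_of_succ_le hk) i (Nat.lt_succ_iff.mp h)).trans
          (hmono k (Nat.lt_of_succ_le hk)).le
      · rw [le_antisymm hi h]
  have hpos : ∀ i, i ≤ n → 0 ≤ tt i := fun i hi => h0.trans (hmono' i hi 0 (Nat.zero_le _))
  have hle : ∀ i, i ≤ n → tt i ≤ t := fun i hi => (hmono' n le_rfl i hi).trans hn
  have hterm : ∀ i ∈ Finset.range n,
      max (|x (tt (i + 1)) - x (tt i)| - δ) 0 ≤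
        2 * M * ((D.filter (fun d => d ∈ Set.Ioc (tt i) (tt (i+1)))).card : ℝ) := by
    intro i hi
    rw [Finset.mem_range] at hi
    rcases (D.filter (fun d => d ∈ Set.Ioc (tt i) (tt (i+1)))).eq_empty_or_nonempty with he | hne
    · have hfree : ∀ d ∈ D, d ∉ Set.Ioc (tt i) (tt (i+1)) := by
        intro d hd hcon
        have : d ∈ D.filter (fun d => d ∈ Set.Ioc (tt i) (tt (i+1))) :=
          Finset.mem_filter.mpr ⟨hd, hcon⟩
        rw [he] at this
        exact absurd this (Finset.notMem_empty d)
      have hlt := hD (tt i) (tt (i+1)) (hpos i hi.le) (hmono i hi) (hle (i+1) hi) hfree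
      rw [he]
      simp only [Finset.card_empty, Nat.cast_zero, mul_zero]
      exact max_le (by linarith) le_rfl
    · have hcard : (1:ℝ) ≤ ((D.filter (fun d => d ∈ Set.Ioc (tt i) (tt (i+1)))).card : ℝ) := by
        exact_mod_cast Finset.Nonempty.card_pos hne
      have h1 : |x (tt (i+1))| ≤ M := hMbound _ (hpos (i+1) hi) (hle (i+1) hi)
      have h2 : |x (tt i)| ≤ M := hMbound _ (hpos i hi.le) (hle i hi.le)
      have h3 : |x (tt (i+1)) - x (tt i)| ≤ |x (tt (i+1))| + |x (tt i)| := abs_sub _ _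
      calc max (|x (tt (i + 1)) - x (tt i)| - δ) 0 ≤ 2 * M := max_le (by linarith) (by linarith)
        _ = 2 * M * 1 := (mul_one _).symm
        _ ≤ _ := mul_le_mul_of_nonneg_left hcard (by linarith)
  have hcards : ∑ i ∈ Finset.range n,
      ((D.filter (fun d => d ∈ Set.Ioc (tt i) (tt (i+1)))).card : ℝ) ≤ (D.card : ℝ) := by
    rw [← Nat.cast_sum]
    have hnat : ∑ i ∈ Finset.range n,
        (D.filter (fun d => d ∈ Set.Ioc (tt i) (tt (i+1)))).card ≤ D.card := by
      simp only [Finset.card_filter]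
      rw [Finset.sum_comm]
      have hinner : ∀ d ∈ D,
          (∑ i ∈ Finset.range n, if d ∈ Set.Ioc (tt i) (tt (i+1)) then 1 else 0) ≤ 1 := by
        intro d _
        rw [← Finset.card_filter]
        apply Finset.card_le_one.mpr
        intro a ha b hb
        rw [Finset.mem_filter, Finset.mem_range] at ha hb
        rcases lt_trichotomy a b with h | h | h
        · exfalso
          have : tt (a+1) ≤ tt b := hmono' b hb.1.le (a+1) h
          have h1 : d ≤ tt (a+1) := ha.2.2
          have h2 : tt b < d := hb.2.1
          linarith
        · exact h
        · exfalso
          have : tt (b+1) ≤ tt a := hmono' a ha.1.le (b+1) h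
          have h1 : d ≤ tt (b+1) := hb.2.2
          have h2 : tt a < d := ha.2.1
          linarith
      calc ∑ d ∈ D, ∑ i ∈ Finset.range n, (if d ∈ Set.Ioc (tt i) (tt (i+1)) then 1 else 0)
          ≤ ∑ _d ∈ D, 1 := Finset.sum_le_sum hinner
        _ = D.card := by simp
    exact_mod_cast hnat
  calc ∑ i ∈ Finset.range n, max (|x (tt (i + 1)) - x (tt i)| - δ) 0
      ≤ ∑ i ∈ Finset.range n,
          2 * M * ((D.filter (fun d => d ∈ Set.Ioc (tt i) (tt (i+1)))).card : ℝ) :=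
        Finset.sum_le_sum hterm
    _ = 2 * M * ∑ i ∈ Finset.range n,
          ((D.filter (fun d => d ∈ Set.Ioc (tt i) (tt (i+1)))).card : ℝ) := by
        rw [Finset.mul_sum]
    _ ≤ 2 * M * D.card := mul_le_mul_of_nonneg_left hcards (by linarith)

lemma ttv_nonneg (x : ℝ → ℝ) (hx : Cadlag x) (t : ℝ) (ht : 0 ≤ t) (δ : ℝ) (hδ : 0 < δ) :
    0 ≤ TTV x 0 t δ := by
  refine le_csSup (ttv_bddAbove x hx t ht δ hδ) ?_
  exact ⟨0, fun _ => 0, le_rfl, ht, fun i hi => absurd hi (Nat.not_lt_zero i), by simp⟩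

lemma ttv_mono (x : ℝ → ℝ) (hx : Cadlag x) (t : ℝ) (ht : 0 ≤ t) {δ1 δ2 : ℝ}
    (h1 : 0 < δ1) (h12 : δ1 ≤ δ2) : TTV x 0 t δ2 ≤ TTV x 0 t δ1 := by
  refine csSup_le ⟨0, 0, fun _ => 0, le_rfl, ht,
    fun i hi => absurd hi (Nat.not_lt_zero i), by simp⟩ ?_
  rintro v ⟨n, tt, h0, hn, hm, rfl⟩
  have hle : ∑ i ∈ Finset.range n, max (|x (tt (i + 1)) - x (tt i)| - δ2) 0 ≤
      ∑ i ∈ Finset.range n, max (|x (tt (i + 1)) - x (tt i)| - δ1) 0 :=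
    Finset.sum_le_sum fun i _ => max_le_max (by linarith) le_rfl
  refine hle.trans (le_csSup (ttv_bddAbove x hx t ht δ1 h1) ?_)
  exact ⟨n, tt, h0, hn, hm, rfl⟩

/-- comparison of `ε · TTV(x,[0,t],ε)` with the values along the
sequences `1/⌊1/ε⌋` and `1/⌈1/ε⌉`. -/
theorem statement14 (x : ℝ → ℝ) (hx : Cadlag x) (t : ℝ) (ht : 0 ≤ t)
    (ε : ℝ) (hε0 : 0 < ε) (hε1 : ε < 1) :
    ((⌊1 / ε⌋ : ℝ) / ((⌊1 / ε⌋ : ℝ) + 1)) * ((1 : ℝ) / (⌊1 / ε⌋ : ℝ)) *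
        TTV x 0 t (1 / (⌊1 / ε⌋ : ℝ)) ≤ ε * TTV x 0 t ε ∧
      ε * TTV x 0 t ε ≤
        ((⌈1 / ε⌉ : ℝ) / ((⌈1 / ε⌉ : ℝ) - 1)) * ((1 : ℝ) / (⌈1 / ε⌉ : ℝ)) *
          TTV x 0 t (1 / (⌈1 / ε⌉ : ℝ)) := by
  have h1ε : 1 < 1 / ε := by rw [lt_div_iff₀ hε0]; linarith
  -- floor facts
  have hn1 : (1:ℤ) ≤ ⌊1 / ε⌋ := Int.le_floor.mpr (by exact_mod_cast h1ε.le)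
  have hnR : (1:ℝ) ≤ (⌊1 / ε⌋ : ℝ) := by exact_mod_cast hn1
  have hnpos : (0:ℝ) < (⌊1 / ε⌋ : ℝ) := by linarith
  have hfl : ((⌊1 / ε⌋ : ℝ)) ≤ 1 / ε := Int.floor_le _
  have hfl' : (⌊1 / ε⌋ : ℝ) * ε ≤ 1 := by
    have := (le_div_iff₀ hε0).mp hfl
    linarith
  have hεn : ε ≤ 1 / (⌊1 / ε⌋ : ℝ) := (le_div_iff₀ hnpos).mpr (by nlinarith)
  have hflu : 1 / ε < (⌊1 / ε⌋ : ℝ) + 1 := by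
    have := Int.lt_floor_add_one (1 / ε)
    push_cast at this ⊢
    linarith
  have hn1ε : 1 / ((⌊1 / ε⌋ : ℝ) + 1) ≤ ε := by
    rw [div_le_iff₀ (by linarith)]
    have := (div_lt_iff₀ hε0).mp hflu
    nlinarith
  -- ceiling facts
  have hcl : 1 / ε ≤ (⌈1 / ε⌉ : ℝ) := Int.le_ceil _
  have hmR : (1:ℝ) < (⌈1 / ε⌉ : ℝ) := lt_of_lt_of_le h1ε hcl
  have hmpos : (0:ℝ) < (⌈1 / ε⌉ : ℝ) := by linarith
  have hcl' : 1 ≤ (⌈1 / ε⌉ : ℝ) * ε := by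
    have := (div_le_iff₀ hε0).mp hcl
    linarith
  have h1m : 1 / (⌈1 / ε⌉ : ℝ) ≤ ε := (div_le_iff₀ hmpos).mpr (by nlinarith)
  have h1mpos : (0:ℝ) < 1 / (⌈1 / ε⌉ : ℝ) := by positivity
  have hclu : (⌈1 / ε⌉ : ℝ) < 1 / ε + 1 := Int.ceil_lt_add_one _
  have hεm : ε ≤ 1 / ((⌈1 / ε⌉ : ℝ) - 1) := by
    rw [le_div_iff₀ (by linarith)]
    have : ((⌈1 / ε⌉ : ℝ) - 1) < 1 / ε := by linarith
    have := (lt_div_iff₀ hε0).mp this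
    linarith
  -- TTV facts
  have h1npos : (0:ℝ) < 1 / (⌊1 / ε⌋ : ℝ) := by positivity
  have hTn0 : 0 ≤ TTV x 0 t (1 / (⌊1 / ε⌋ : ℝ)) := ttv_nonneg x hx t ht _ h1npos
  have hTm0 : 0 ≤ TTV x 0 t (1 / (⌈1 / ε⌉ : ℝ)) := ttv_nonneg x hx t ht _ h1mpos
  have hmonL : TTV x 0 t (1 / (⌊1 / ε⌋ : ℝ)) ≤ TTV x 0 t ε := ttv_mono x hx t ht hε0 hεn
  have hmonR : TTV x 0 t ε ≤ TTV x 0 t (1 / (⌈1 / ε⌉ : ℝ)) := ttv_mono x hx t ht h1mpos h1m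
  constructor
  · have hcoef : ((⌊1 / ε⌋ : ℝ) / ((⌊1 / ε⌋ : ℝ) + 1)) * ((1 : ℝ) / (⌊1 / ε⌋ : ℝ)) =
        1 / ((⌊1 / ε⌋ : ℝ) + 1) := by
      field_simp
    rw [hcoef]
    calc (1 / ((⌊1 / ε⌋ : ℝ) + 1)) * TTV x 0 t (1 / (⌊1 / ε⌋ : ℝ))
        ≤ ε * TTV x 0 t (1 / (⌊1 / ε⌋ : ℝ)) := mul_le_mul_of_nonneg_right hn1ε hTn0
      _ ≤ ε * TTV x 0 t ε := mul_le_mul_of_nonneg_left hmonL hε0.le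
  · have hcoef : ((⌈1 / ε⌉ : ℝ) / ((⌈1 / ε⌉ : ℝ) - 1)) * ((1 : ℝ) / (⌈1 / ε⌉ : ℝ)) =
        1 / ((⌈1 / ε⌉ : ℝ) - 1) := by
      have h1 : (⌈1 / ε⌉ : ℝ) ≠ 0 := ne_of_gt hmpos
      have h2 : (⌈1 / ε⌉ : ℝ) - 1 ≠ 0 := by intro h; rw [sub_eq_zero] at h; linarith
      field_simp
    rw [hcoef]
    calc ε * TTV x 0 t ε ≤ ε * TTV x 0 t (1 / (⌈1 / ε⌉ : ℝ)) :=
          mul_le_mul_of_nonneg_left hmonR hε0.le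
      _ ≤ (1 / ((⌈1 / ε⌉ : ℝ) - 1)) * TTV x 0 t (1 / (⌈1 / ε⌉ : ℝ)) :=
          mul_le_mul_of_nonneg_right hεm hTm0
end
end
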